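/- arXiv:2505.18439 — 7 statements merged into one kernel-verified Lean document; each statement's English description precedes it below -/
import Mathlib

section
/- g₁′(r) ≤ 0 for all r ∈ (0,R); that is, the radial part of the first Dirichlet eigenfunction of a geodesic ball in 𝕂ℍⁿ is nonincreasing. -/
/-- The radial part of the first Dirichlet eigenfunction of a geodesic
ball in 𝕂ℍⁿ is nonincreasing: g₁′(r) ≤ 0 for all r ∈ (0,R). -/
theorem stmt_1
    (k n : ℕ) (hk : k = 2 ∨ k = 4 ∨ k = 8) (hn : 2 ≤ n) (hk8 : k = 8 → n = 2)
    (H : ℝ → ℝ)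
    (hH : ∀ r : ℝ, 0 < r →
      H r = ((k : ℝ) * n - 1) * (Real.cosh r / Real.sinh r) + ((k : ℝ) - 1) * Real.tanh r)
    (R lam1 : ℝ) (hR : 0 < R) (hlam1 : 0 < lam1)
    (g₁ g₁' g₁'' : ℝ → ℝ)
    (hg₁d : ∀ r : ℝ, 0 < r → HasDerivAt g₁ (g₁' r) r)
    (hg₁d' : ∀ r : ℝ, 0 < r → HasDerivAt g₁' (g₁'' r) r)
    (hg₁c : ContinuousOn g₁'' (Set.Ioi 0))
    (hg₁ode : ∀ r : ℝ, 0 < r → g₁'' r + H r * g₁' r + lam1 * g₁ r = 0)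
    (hg₁pos : ∀ r ∈ Set.Ioo (0 : ℝ) R, 0 < g₁ r)
    (hg₁R : g₁ R = 0)
    (hg₁lim : Filter.Tendsto g₁ (nhdsWithin 0 (Set.Ioi 0)) (nhds 1))
    (hg₁'lim : Filter.Tendsto g₁' (nhdsWithin 0 (Set.Ioi 0)) (nhds 0)) :
    ∀ r ∈ Set.Ioo (0 : ℝ) R, g₁' r ≤ 0 := by
  have hk2 : 2 ≤ k := by rcases hk with h | h | h <;> omega
  have hkn : 4 ≤ k * n := le_trans (by norm_num) (Nat.mul_le_mul hk2 hn)
  set a : ℕ := k * n - 1 with ha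
  set b : ℕ := k - 1 with hb
  have ha1 : 1 ≤ a := by omega
  have hb1 : 1 ≤ b := by omega
  have haR : (a : ℝ) = (k : ℝ) * (n : ℝ) - 1 := by
    rw [ha, Nat.cast_sub (by omega : 1 ≤ k * n)]; push_cast; ring
  have hbR : (b : ℝ) = (k : ℝ) - 1 := by
    rw [hb, Nat.cast_sub (by omega : 1 ≤ k)]; push_cast; ring
  set w : ℝ → ℝ := fun r => Real.sinh r ^ a * Real.cosh r ^ b with hw
  have hwpos : ∀ r : ℝ, 0 < r → 0 < w r := fun r hr =>
    mul_pos (pow_pos (Real.sinh_pos_iff.mpr hr) a) (pow_pos (Real.cosh_pos r) b)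
  -- derivative of the weight
  have hwd : ∀ r : ℝ, 0 < r → HasDerivAt w (H r * w r) r := by
    intro r hr
    have hs := Real.sinh_pos_iff.mpr hr
    have hc := Real.cosh_pos r
    have d1 : HasDerivAt (fun x => Real.sinh x ^ a)
        ((a : ℝ) * Real.sinh r ^ (a - 1) * Real.cosh r) r :=
      (Real.hasDerivAt_sinh r).pow a
    have d2 : HasDerivAt (fun x => Real.cosh x ^ b)
        ((b : ℝ) * Real.cosh r ^ (b - 1) * Real.sinh r) r :=
      (Real.hasDerivAt_cosh r).pow b
    have hprod := d1.mul d2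
    convert hprod using 1
    case e'_4 => rfl
    case e'_5 => rfl
    case e'_8 => rfl
    have hsa : Real.sinh r ^ a = Real.sinh r ^ (a - 1) * Real.sinh r := by
      rw [← pow_succ]; congr 1; omega
    have hcb : Real.cosh r ^ b = Real.cosh r ^ (b - 1) * Real.cosh r := by
      rw [← pow_succ]; congr 1; omega
    rw [hH r hr, Real.tanh_eq_sinh_div_cosh, ← haR, ← hbR, hw]
    simp only [hsa, hcb]
    field_simp
  set F : ℝ → ℝ := fun r => w r * g₁' r with hF
  have hFd : ∀ r : ℝ, 0 < r →
      HasDerivAt F (H r * w r * g₁' r + w r * g₁'' r) r := by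
    intro r hr
    exact (hwd r hr).mul (hg₁d' r hr)
  have hFderiv_neg : ∀ x ∈ Set.Ioo (0 : ℝ) R, deriv F x < 0 := by
    intro x hx
    rw [(hFd x hx.1).deriv]
    have hode := hg₁ode x hx.1
    have hwx := hwpos x hx.1
    have hgx := hg₁pos x hx
    have : H x * w x * g₁' x + w x * g₁'' x = -(w x * (lam1 * g₁ x)) := by
      have : g₁'' x = -(H x * g₁' x + lam1 * g₁ x) := by linarith
      rw [this]; ring
    rw [this]
    have : 0 < w x * (lam1 * g₁ x) := mul_pos hwx (mul_pos hlam1 hgx)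
    linarith
  -- limit of F at 0⁺
  have hwc : Continuous w := by
    exact (Real.continuous_sinh.pow a).mul (Real.continuous_cosh.pow b)
  have hwlim : Filter.Tendsto w (nhdsWithin 0 (Set.Ioi 0)) (nhds 0) := by
    have h0 : w 0 = 0 := by
      simp [hw, Real.sinh_zero, zero_pow (by omega : a ≠ 0)]
    have := (hwc.tendsto 0).mono_left
      (nhdsWithin_le_nhds : nhdsWithin (0:ℝ) (Set.Ioi 0) ≤ nhds 0)
    rwa [h0] at this
  have hFlim : Filter.Tendsto F (nhdsWithin 0 (Set.Ioi 0)) (nhds 0) := by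
    have := hwlim.mul hg₁'lim
    simpa using this
  intro r hr
  -- F is strictly decreasing on [s, r] for 0 < s < r
  have key : ∀ s ∈ Set.Ioo (0 : ℝ) r, F r < F s := by
    intro s hs
    have hsub : Set.Icc s r ⊆ Set.Ioi (0 : ℝ) := fun x hx => lt_of_lt_of_le hs.1 hx.1
    have hcont : ContinuousOn F (Set.Icc s r) := fun x hx =>
      ((hFd x (hsub hx)).continuousAt).continuousWithinAt
    have hanti : StrictAntiOn F (Set.Icc s r) := by
      apply strictAntiOn_of_deriv_neg (convex_Icc s r) hcont
      intro x hx
      rw [interior_Icc] at hx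
      exact hFderiv_neg x ⟨lt_trans hs.1 hx.1, lt_trans hx.2 hr.2⟩
    exact hanti ⟨le_refl s, hs.2.le⟩ ⟨hs.2.le, le_refl r⟩ hs.2
  have hFr : F r ≤ 0 := by
    refine ge_of_tendsto hFlim ?_
    filter_upwards [Ioo_mem_nhdsGT_of_mem ⟨le_refl (0 : ℝ), hr.1⟩] with s hs
    exact (key s hs).le
  have hwr := hwpos r hr.1
  have hFr' : w r * g₁' r ≤ 0 := hFr
  by_contra h
  push_neg at h
  nlinarith [mul_pos hwr h]
end

section
/- Assume in addition that lim_{r→0⁺} g₁′(r)/r exists in ℝ. Then the function φ = g₁′/g₁ satisfies φ′(r) < 0 for all r ∈ (0,R); in particular, g₁ is strictly log-concave on (0,R). -/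
open Real Filter Set Topology

lemma aux_sinh_div : Tendsto (fun r : ℝ => Real.sinh r / r) (𝓝[>] (0:ℝ)) (𝓝 1) := by
  have h := (Real.hasDerivAt_sinh 0)
  rw [hasDerivAt_iff_tendsto_slope] at h
  have h2 : Tendsto (slope Real.sinh 0) (𝓝[>] (0:ℝ)) (𝓝 (Real.cosh 0)) :=
    h.mono_left (nhdsWithin_mono _ (fun x hx => ne_of_gt hx))
  rw [Real.cosh_zero] at h2
  refine h2.congr fun r => ?_
  rw [slope_def_field, Real.sinh_zero, sub_zero, sub_zero]

lemma aux_div_sinh : Tendsto (fun r : ℝ => r / Real.sinh r) (𝓝[>] (0:ℝ)) (𝓝 1) := by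
  have h := aux_sinh_div.inv₀ one_ne_zero
  rw [inv_one] at h
  refine h.congr fun r => ?_
  rw [inv_div]

lemma aux_Hmodel (a b r : ℝ) (hr : 0 < r) :
    HasDerivAt (fun s : ℝ => a * (Real.cosh s / Real.sinh s) + b * Real.tanh s)
      (a * (-1 / Real.sinh r ^ 2) + b * (1 / Real.cosh r ^ 2)) r := by
  have hs : Real.sinh r ≠ 0 := ne_of_gt (Real.sinh_pos_iff.2 hr)
  have hc : Real.cosh r ≠ 0 := ne_of_gt (Real.cosh_pos r)
  have hid : Real.cosh r ^ 2 - Real.sinh r ^ 2 = 1 := Real.cosh_sq_sub_sinh_sq r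
  have h1 : HasDerivAt (fun s => Real.cosh s / Real.sinh s)
      ((Real.sinh r * Real.sinh r - Real.cosh r * Real.cosh r) / Real.sinh r ^ 2) r :=
    (Real.hasDerivAt_cosh r).div (Real.hasDerivAt_sinh r) hs
  have h2 : HasDerivAt Real.tanh
      ((Real.cosh r * Real.cosh r - Real.sinh r * Real.sinh r) / Real.cosh r ^ 2) r := by
    have h3 : HasDerivAt (fun s => Real.sinh s / Real.cosh s)
        ((Real.cosh r * Real.cosh r - Real.sinh r * Real.sinh r) / Real.cosh r ^ 2) r :=
      (Real.hasDerivAt_sinh r).div (Real.hasDerivAt_cosh r) hc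
    have : Real.tanh = fun s => Real.sinh s / Real.cosh s :=
      funext fun s => Real.tanh_eq_sinh_div_cosh s
    rw [this]
    exact h3
  have := (h1.const_mul a).add (h2.const_mul b)
  have e1 : (-1 / Real.sinh r ^ 2) = (Real.sinh r * Real.sinh r - Real.cosh r * Real.cosh r) / Real.sinh r ^ 2 := by
    rw [div_eq_div_iff (by positivity : (Real.sinh r ^ 2) ≠ 0) (by positivity : (Real.sinh r ^ 2) ≠ 0)]
    nlinarith
  have e2 : (1 / Real.cosh r ^ 2) = (Real.cosh r * Real.cosh r - Real.sinh r * Real.sinh r) / Real.cosh r ^ 2 := by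
    rw [div_eq_div_iff (by positivity : (Real.cosh r ^ 2) ≠ 0) (by positivity : (Real.cosh r ^ 2) ≠ 0)]
    nlinarith
  rw [e1, e2]
  exact this



/-- Assuming additionally that g₁′(r)/r has a finite limit as r → 0⁺,
the function φ = g₁′/g₁ satisfies φ′(r) < 0 on (0,R); in particular g₁ is strictly
log-concave on (0,R). -/
theorem stmt_2
    (k n : ℕ) (hk : k = 2 ∨ k = 4 ∨ k = 8) (hn : 2 ≤ n) (hk8 : k = 8 → n = 2)
    (H : ℝ → ℝ)
    (hH : ∀ r : ℝ, 0 < r →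
      H r = ((k : ℝ) * n - 1) * (Real.cosh r / Real.sinh r) + ((k : ℝ) - 1) * Real.tanh r)
    (R lam1 : ℝ) (hR : 0 < R) (hlam1 : 0 < lam1)
    (g₁ g₁' g₁'' : ℝ → ℝ)
    (hg₁d : ∀ r : ℝ, 0 < r → HasDerivAt g₁ (g₁' r) r)
    (hg₁d' : ∀ r : ℝ, 0 < r → HasDerivAt g₁' (g₁'' r) r)
    (hg₁c : ContinuousOn g₁'' (Set.Ioi 0))
    (hg₁ode : ∀ r : ℝ, 0 < r → g₁'' r + H r * g₁' r + lam1 * g₁ r = 0)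
    (hg₁pos : ∀ r ∈ Set.Ioo (0 : ℝ) R, 0 < g₁ r)
    (hg₁R : g₁ R = 0)
    (hg₁lim : Filter.Tendsto g₁ (nhdsWithin 0 (Set.Ioi 0)) (nhds 1))
    (hg₁'lim : Filter.Tendsto g₁' (nhdsWithin 0 (Set.Ioi 0)) (nhds 0))
    (hquot : ∃ L : ℝ, Filter.Tendsto (fun r => g₁' r / r) (nhdsWithin 0 (Set.Ioi 0)) (nhds L)) :
    (∀ r ∈ Set.Ioo (0 : ℝ) R, deriv (fun s => g₁' s / g₁ s) r < 0) ∧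
    StrictConcaveOn ℝ (Set.Ioo (0 : ℝ) R) (fun r => Real.log (g₁ r)) := by
  classical
  obtain ⟨L, hL⟩ := hquot
  set a : ℝ := (k : ℝ) * n - 1 with ha_def
  set b : ℝ := (k : ℝ) - 1 with hb_def
  have hk2 : (2:ℝ) ≤ (k:ℝ) := by
    rcases hk with h | h | h <;> simp [h] <;> norm_num
  have hn2 : (2:ℝ) ≤ (n:ℝ) := by exact_mod_cast hn
  have ha1 : 1 ≤ a := by have : (4:ℝ) ≤ (k:ℝ) * n := by nlinarith
                         simp only [ha_def]; linarith
  have hb1 : 1 ≤ b := by simp only [hb_def]; linarith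
  have hba : b < a := by simp only [ha_def, hb_def]; nlinarith
  -- the quotient φ and the Riccati expression ψ
  set φ : ℝ → ℝ := fun r => g₁' r / g₁ r with hφ_def
  set ψ : ℝ → ℝ := fun r => -lam1 - H r * φ r - φ r ^ 2 with hψ_def
  -- φ has derivative ψ on (0,R)
  have hφd : ∀ r ∈ Set.Ioo (0:ℝ) R, HasDerivAt φ (ψ r) r := by
    intro r hr
    have hg : 0 < g₁ r := hg₁pos r hr
    have h := (hg₁d' r hr.1).div (hg₁d r hr.1) (ne_of_gt hg)
    refine (h.congr_deriv ?_ : HasDerivAt φ (ψ r) r)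
    symm
    show -lam1 - H r * (g₁' r / g₁ r) - (g₁' r / g₁ r) ^ 2 = (g₁'' r * g₁ r - g₁' r * g₁' r) / g₁ r ^ 2
    have hode := hg₁ode r hr.1
    field_simp
    linear_combination (-(g₁ r)) * hode
  -- limits near 0
  have hsd : Tendsto (fun r : ℝ => r / Real.sinh r) (𝓝[>] (0:ℝ)) (𝓝 1) := aux_div_sinh
  have hcosh : Tendsto Real.cosh (𝓝[>] (0:ℝ)) (𝓝 1) := by
    have h := Real.continuous_cosh.tendsto 0
    rw [Real.cosh_zero] at h
    exact h.mono_left nhdsWithin_le_nhds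
  have htanh : Tendsto Real.tanh (𝓝[>] (0:ℝ)) (𝓝 0) := by
    have hc : Continuous Real.tanh := by
      have he : Real.tanh = fun s => Real.sinh s / Real.cosh s :=
        funext fun s => Real.tanh_eq_sinh_div_cosh s
      rw [he]
      exact Real.continuous_sinh.div Real.continuous_cosh fun x => ne_of_gt (Real.cosh_pos x)
    have h := hc.tendsto 0
    rw [Real.tanh_zero] at h
    exact h.mono_left nhdsWithin_le_nhds
  have hHmul : ∀ (u : ℝ → ℝ) (U M : ℝ), Tendsto u (𝓝[>] (0:ℝ)) (𝓝 U) →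
      Tendsto (fun r => u r / r) (𝓝[>] (0:ℝ)) (𝓝 M) →
      Tendsto (fun r => H r * u r) (𝓝[>] (0:ℝ)) (𝓝 (a * M)) := by
    intro u U M hu huM
    have h1 : Tendsto (fun r => a * (Real.cosh r * ((r / Real.sinh r) * (u r / r)))
        + b * (Real.tanh r * u r)) (𝓝[>] (0:ℝ))
        (𝓝 (a * (1 * (1 * M)) + b * (0 * U))) :=
      ((tendsto_const_nhds.mul (hcosh.mul (hsd.mul huM)))).add
        (tendsto_const_nhds.mul (htanh.mul hu))
    have h2 : a * (1 * (1 * M)) + b * (0 * U) = a * M := by ring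
    rw [h2] at h1
    refine h1.congr' ?_
    filter_upwards [self_mem_nhdsWithin] with r hr
    have hr0 : (0:ℝ) < r := hr
    have hs : Real.sinh r ≠ 0 := ne_of_gt (Real.sinh_pos_iff.2 hr0)
    rw [hH r hr0, Real.tanh_eq_sinh_div_cosh]
    field_simp
  have hHg' : Tendsto (fun r => H r * g₁' r) (𝓝[>] (0:ℝ)) (𝓝 (a * L)) := hHmul g₁' 0 L hg₁'lim hL
  have hg''lim : Tendsto g₁'' (𝓝[>] (0:ℝ)) (𝓝 (-(a * L) - lam1)) := by
    have h1 : Tendsto (fun r => -(H r * g₁' r) - lam1 * g₁ r) (𝓝[>] (0:ℝ))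
        (𝓝 (-(a * L) - lam1 * 1)) := (hHg'.neg).sub (tendsto_const_nhds.mul hg₁lim)
    rw [mul_one] at h1
    refine h1.congr' ?_
    filter_upwards [self_mem_nhdsWithin] with r hr
    have := hg₁ode r hr
    linarith
  have hlhop : Tendsto (fun r => g₁' r / r) (𝓝[>] (0:ℝ)) (𝓝 (-(a * L) - lam1)) := by
    refine HasDerivAt.lhopital_zero_right_on_Ioo (a := (0:ℝ)) (b := (1:ℝ)) (g' := fun _ => (1:ℝ))
      (by norm_num) (fun x hx => hg₁d' x hx.1) (fun x _ => hasDerivAt_id x)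
      (fun x _ => one_ne_zero) hg₁'lim (tendsto_id.mono_right nhdsWithin_le_nhds) ?_
    refine hg''lim.congr fun r => ?_
    rw [div_one]
  have hLval : L = -(a * L) - lam1 := tendsto_nhds_unique hL hlhop
  have hLneg : L < 0 := by nlinarith
  have hφlim : Tendsto φ (𝓝[>] (0:ℝ)) (𝓝 0) := by
    have h := hg₁'lim.div hg₁lim one_ne_zero
    rw [zero_div] at h
    exact h
  have hφr : Tendsto (fun r => φ r / r) (𝓝[>] (0:ℝ)) (𝓝 L) := by
    have h := hL.div hg₁lim one_ne_zero
    rw [div_one] at h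
    refine h.congr fun r => ?_
    simp only [Pi.div_apply, hφ_def]
    rw [div_right_comm]
  have hψlim : Tendsto ψ (𝓝[>] (0:ℝ)) (𝓝 L) := by
    have h1 : Tendsto (fun r => -lam1 - H r * φ r - φ r ^ 2) (𝓝[>] (0:ℝ))
        (𝓝 (-lam1 - a * L - 0 ^ 2)) :=
      ((tendsto_const_nhds.sub (hHmul φ 0 L hφlim hφr))).sub (hφlim.pow 2)
    have h2 : -lam1 - a * L - (0:ℝ) ^ 2 = L := by linear_combination -hLval
    rw [h2] at h1
    exact h1
  -- H has negative derivative on (0,∞)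
  have hHd : ∀ r : ℝ, 0 < r → HasDerivAt H
      (a * (-1 / Real.sinh r ^ 2) + b * (1 / Real.cosh r ^ 2)) r := by
    intro r hr
    refine (aux_Hmodel a b r hr).congr_of_eventuallyEq ?_
    filter_upwards [Ioi_mem_nhds hr] with x hx
    exact hH x hx
  have hHderneg : ∀ r : ℝ, 0 < r →
      a * (-1 / Real.sinh r ^ 2) + b * (1 / Real.cosh r ^ 2) < 0 := by
    intro r hr
    have hs : 0 < Real.sinh r := Real.sinh_pos_iff.2 hr
    have hc : 0 < Real.cosh r := Real.cosh_pos r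
    have hid : Real.cosh r ^ 2 - Real.sinh r ^ 2 = 1 := Real.cosh_sq_sub_sinh_sq r
    have hkey : a * (-1 / Real.sinh r ^ 2) + b * (1 / Real.cosh r ^ 2)
        = (b * Real.sinh r ^ 2 - a * Real.cosh r ^ 2) / (Real.sinh r ^ 2 * Real.cosh r ^ 2) := by
      field_simp
      ring
    rw [hkey]
    apply div_neg_of_neg_of_pos
    · nlinarith
    · positivity
  -- continuity of ψ inside (0,R)
  have hψcont : ∀ r ∈ Set.Ioo (0:ℝ) R, ContinuousAt ψ r := by
    intro r hr
    have h1 : ContinuousAt H r := (hHd r hr.1).continuousAt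
    have h2 : ContinuousAt φ r := (hφd r hr).continuousAt
    exact (continuousAt_const.sub (h1.mul h2)).sub (h2.pow 2)
  -- main claim : ψ < 0 on (0,R)
  have key : ∀ r ∈ Set.Ioo (0:ℝ) R, ψ r < 0 := by
    by_contra hcon
    push_neg at hcon
    obtain ⟨r₁, hr₁, hψr₁⟩ := hcon
    have hev : ∀ᶠ r in 𝓝[>] (0:ℝ), ψ r < 0 := hψlim.eventually (eventually_lt_nhds hLneg)
    rw [Filter.eventually_iff, mem_nhdsGT_iff_exists_Ioo_subset] at hev
    obtain ⟨u, hu, hsub⟩ := hev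
    have hu0 : (0:ℝ) < u := hu
    set ε : ℝ := min (u / 2) (r₁ / 2) with hε_def
    have hε0 : 0 < ε := lt_min (half_pos hu0) (half_pos hr₁.1)
    have hεu : ε < u := lt_of_le_of_lt (min_le_left _ _) (half_lt_self hu0)
    have hεr₁ : ε < r₁ := lt_of_le_of_lt (min_le_right _ _) (half_lt_self hr₁.1)
    have hψsmall : ∀ x : ℝ, 0 < x → x ≤ ε → ψ x < 0 := fun x hx hxε =>
      hsub ⟨hx, lt_of_le_of_lt hxε hεu⟩
    set S : Set ℝ := Set.Icc ε r₁ ∩ ψ ⁻¹' Set.Ici 0 with hS_def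
    have hIccsub : Set.Icc ε r₁ ⊆ Set.Ioo 0 R := fun x hx =>
      ⟨lt_of_lt_of_le hε0 hx.1, lt_of_le_of_lt hx.2 hr₁.2⟩
    have hScl : IsClosed S := ContinuousOn.preimage_isClosed_of_isClosed
      (fun x hx => (hψcont x (hIccsub hx)).continuousWithinAt) isClosed_Icc isClosed_Ici
    have hSne : S.Nonempty := ⟨r₁, ⟨le_of_lt hεr₁, le_refl r₁⟩, hψr₁⟩
    have hSbdd : BddBelow S := ⟨ε, fun x hx => hx.1.1⟩
    set r₀ : ℝ := sInf S with hr₀_def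
    have hr₀S : r₀ ∈ S := hScl.csInf_mem hSne hSbdd
    have hr₀pos : 0 < r₀ := lt_of_lt_of_le hε0 hr₀S.1.1
    have hr₀R : r₀ < R := lt_of_le_of_lt hr₀S.1.2 hr₁.2
    have hr₀Ioo : r₀ ∈ Set.Ioo (0:ℝ) R := ⟨hr₀pos, hr₀R⟩
    have hbelow : ∀ x : ℝ, 0 < x → x < r₀ → ψ x < 0 := by
      intro x hx hxr₀
      by_cases hxε : x ≤ ε
      · exact hψsmall x hx hxε
      · push_neg at hxε
        by_contra hψx
        push_neg at hψx
        have hxS : x ∈ S := ⟨⟨le_of_lt hxε, le_trans (le_of_lt hxr₀) hr₀S.1.2⟩, hψx⟩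
        exact absurd (csInf_le hSbdd hxS) (not_le.mpr hxr₀)
    have hψr₀le : ψ r₀ ≤ 0 := by
      have hten : Tendsto ψ (𝓝[<] r₀) (𝓝 (ψ r₀)) :=
        ((hψcont r₀ hr₀Ioo).tendsto).mono_left nhdsWithin_le_nhds
      refine le_of_tendsto hten ?_
      filter_upwards [Ioo_mem_nhdsLT_of_mem (⟨hr₀pos, le_refl r₀⟩ : r₀ ∈ Set.Ioc 0 r₀)] with x hx
      exact le_of_lt (hbelow x hx.1 hx.2)
    have hψr₀ : ψ r₀ = 0 := le_antisymm hψr₀le hr₀S.2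
    have hsubIoc : Set.Ioc (0:ℝ) r₀ ⊆ Set.Ioo 0 R := fun x hx =>
      ⟨hx.1, lt_of_le_of_lt hx.2 hr₀R⟩
    have hanti : StrictAntiOn φ (Set.Ioc (0:ℝ) r₀) := by
      refine strictAntiOn_of_deriv_neg (convex_Ioc 0 r₀) ?_ ?_
      · exact fun x hx => ((hφd x (hsubIoc hx)).continuousAt).continuousWithinAt
      · intro x hx
        rw [interior_Ioc] at hx
        rw [(hφd x (hsubIoc ⟨hx.1, le_of_lt hx.2⟩)).deriv]
        exact hbelow x hx.1 hx.2
    have hφle : ∀ x : ℝ, x ∈ Set.Ioc (0:ℝ) r₀ → φ x ≤ 0 := by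
      intro x hx
      refine ge_of_tendsto hφlim ?_
      filter_upwards [Ioo_mem_nhdsGT_of_mem (⟨le_refl (0:ℝ), hx.1⟩ : (0:ℝ) ∈ Set.Ico 0 x)] with y hy
      exact le_of_lt (hanti ⟨hy.1, le_trans (le_of_lt hy.2) hx.2⟩ hx hy.2)
    have hφr₀neg : φ r₀ < 0 := by
      have h1 : φ r₀ < φ (r₀ / 2) :=
        hanti ⟨half_pos hr₀pos, le_of_lt (half_lt_self hr₀pos)⟩
          ⟨hr₀pos, le_refl r₀⟩ (half_lt_self hr₀pos)
      have h2 : φ (r₀ / 2) ≤ 0 := hφle _ ⟨half_pos hr₀pos, le_of_lt (half_lt_self hr₀pos)⟩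
      linarith
    set D : ℝ := a * (-1 / Real.sinh r₀ ^ 2) + b * (1 / Real.cosh r₀ ^ 2) with hD_def
    have hDneg : D < 0 := hHderneg r₀ hr₀pos
    have hφd0 : HasDerivAt φ 0 r₀ := hψr₀ ▸ hφd r₀ hr₀Ioo
    obtain ⟨m, hψd, hmval⟩ : ∃ m : ℝ, HasDerivAt ψ m r₀ ∧ m = -(D * φ r₀) := by
      refine ⟨_, ((hasDerivAt_const r₀ (-lam1)).sub ((hHd r₀ hr₀pos).mul hφd0)).sub
        (hφd0.pow 2), ?_⟩
      push_cast
      ring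
    have hmneg : m < 0 := by
      have h1 : 0 < D * φ r₀ := mul_pos_of_neg_of_neg hDneg hφr₀neg
      rw [hmval]; linarith
    have hmnonneg : 0 ≤ m := by
      have h := hψd
      rw [hasDerivAt_iff_tendsto_slope] at h
      have h2 := h.mono_left (nhdsWithin_mono r₀ (fun x (hx : x ∈ Set.Iio r₀) => ne_of_lt hx))
      refine ge_of_tendsto h2 ?_
      filter_upwards [Ioo_mem_nhdsLT_of_mem (⟨hr₀pos, le_refl r₀⟩ : r₀ ∈ Set.Ioc 0 r₀)] with x hx
      rw [slope_def_field, hψr₀, sub_zero]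
      exact div_nonneg_of_nonpos (le_of_lt (hbelow x hx.1 hx.2)) (by linarith [hx.2])
    linarith
  constructor
  · intro r hr
    rw [(hφd r hr).deriv]
    exact key r hr
  · refine strictConcaveOn_of_deriv2_neg (convex_Ioo 0 R) ?_ ?_
    · intro x hx
      exact (((hg₁d x hx.1).continuousAt).log (ne_of_gt (hg₁pos x hx))).continuousWithinAt
    · intro x hx
      rw [interior_Ioo] at hx
      have hlogd : ∀ y ∈ Set.Ioo (0:ℝ) R, HasDerivAt (fun r => Real.log (g₁ r)) (φ y) y :=
        fun y hy => (hg₁d y hy.1).log (ne_of_gt (hg₁pos y hy))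
      have hEq : deriv (fun r => Real.log (g₁ r)) =ᶠ[𝓝 x] φ := by
        filter_upwards [isOpen_Ioo.mem_nhds hx] with y hy
        exact (hlogd y hy).deriv
      show deriv (deriv (fun r => Real.log (g₁ r))) x < 0
      rw [hEq.deriv_eq, (hφd x hx).deriv]
      exact key x hx
end

section
/- Let 0 < a < b and μ, ν ∈ ℝ. Suppose f, h : [a,b] → ℝ are twice continuously differentiable and satisfy f″ + H·f′ + μ·f = 0 and h″ + H·h′ + ν·h = 0 on (a,b), with f(a) = f(b) = 0, f > 0 on (a,b), and h > 0 on all of [a,b]. Then μ ≥ ν. -/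
open Real Set Filter Topology

/-- Auxiliary: derivative of J(r) = sinh(r)^(M+1) * cosh(r)^(L+1). -/
lemma aux_J_deriv (M L : ℕ) (r : ℝ) (hr : 0 < r) :
    HasDerivAt (fun x : ℝ => Real.sinh x ^ (M + 1) * Real.cosh x ^ (L + 1))
      ((((M : ℝ) + 1) * (Real.cosh r / Real.sinh r) + ((L : ℝ) + 1) * Real.tanh r) *
        (Real.sinh r ^ (M + 1) * Real.cosh r ^ (L + 1))) r := by
  have hs : HasDerivAt (fun x : ℝ => Real.sinh x ^ (M + 1))
      (((M : ℝ) + 1) * Real.sinh r ^ M * Real.cosh r) r := by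
    have := (Real.hasDerivAt_sinh r).fun_pow (M + 1)
    simpa using this
  have hc : HasDerivAt (fun x : ℝ => Real.cosh x ^ (L + 1))
      (((L : ℝ) + 1) * Real.cosh r ^ L * Real.sinh r) r := by
    have := (Real.hasDerivAt_cosh r).fun_pow (L + 1)
    simpa using this
  have := hs.fun_mul hc
  refine this.congr_deriv ?_
  have hsr : Real.sinh r ≠ 0 := ne_of_gt (Real.sinh_pos_iff.mpr hr)
  have hcr : Real.cosh r ≠ 0 := ne_of_gt ((Real.cosh_pos r))
  rw [Real.tanh_eq_sinh_div_cosh]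
  field_simp
  ring

/-- Sturm-type comparison. Let 0 < a < b, μ, ν ∈ ℝ. If f, h are C² on
[a,b] with f″ + H·f′ + μ·f = 0 and h″ + H·h′ + ν·h = 0 on (a,b), f(a) = f(b) = 0,
f > 0 on (a,b), and h > 0 on [a,b], then μ ≥ ν. Here
H(r) = (kn−1)·coth(r) + (k−1)·tanh(r). -/
theorem stmt_3
    (k n : ℕ) (hk : k = 2 ∨ k = 4 ∨ k = 8) (hn : 2 ≤ n) (hk8 : k = 8 → n = 2)
    (H : ℝ → ℝ)
    (hH : ∀ r : ℝ, 0 < r →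
      H r = ((k : ℝ) * n - 1) * (Real.cosh r / Real.sinh r) + ((k : ℝ) - 1) * Real.tanh r)
    (a b : ℝ) (ha : 0 < a) (hab : a < b) (μ ν : ℝ)
    (f f' f'' h h' h'' : ℝ → ℝ)
    (hfd : ∀ r ∈ Set.Icc a b, HasDerivAt f (f' r) r)
    (hfd' : ∀ r ∈ Set.Icc a b, HasDerivAt f' (f'' r) r)
    (hfc : ContinuousOn f'' (Set.Icc a b))
    (hhd : ∀ r ∈ Set.Icc a b, HasDerivAt h (h' r) r)
    (hhd' : ∀ r ∈ Set.Icc a b, HasDerivAt h' (h'' r) r)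
    (hhc : ContinuousOn h'' (Set.Icc a b))
    (hfode : ∀ r ∈ Set.Ioo a b, f'' r + H r * f' r + μ * f r = 0)
    (hhode : ∀ r ∈ Set.Ioo a b, h'' r + H r * h' r + ν * h r = 0)
    (hfa : f a = 0) (hfb : f b = 0)
    (hfpos : ∀ r ∈ Set.Ioo a b, 0 < f r)
    (hhpos : ∀ r ∈ Set.Icc a b, 0 < h r) :
    ν ≤ μ := by
  by_contra hlt
  push_neg at hlt
  -- set up exponents
  have hk2 : 2 ≤ k := by rcases hk with rfl | rfl | rfl <;> norm_num
  have hkn : 4 ≤ k * n := le_trans (by norm_num) (Nat.mul_le_mul hk2 hn)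
  obtain ⟨M, hM⟩ : ∃ M : ℕ, k * n - 1 = M + 1 := ⟨k * n - 2, by omega⟩
  obtain ⟨L, hL⟩ : ∃ L : ℕ, k - 1 = L + 1 := ⟨k - 2, by omega⟩
  set J : ℝ → ℝ := fun x => Real.sinh x ^ (M + 1) * Real.cosh x ^ (L + 1) with hJdef
  have hMc : ((M : ℝ) + 1) = (k : ℝ) * n - 1 := by
    have : ((k * n - 1 : ℕ) : ℝ) = (k : ℝ) * n - 1 := by
      have : (1 : ℕ) ≤ k * n := by omega
      push_cast [Nat.cast_sub this]
      ring
    rw [← this, hM]; push_cast; ring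
  have hLc : ((L : ℝ) + 1) = (k : ℝ) - 1 := by
    have : ((k - 1 : ℕ) : ℝ) = (k : ℝ) - 1 := by
      have : (1 : ℕ) ≤ k := by omega
      push_cast [Nat.cast_sub this]
      ring
    rw [← this, hL]; push_cast; ring
  have hJderiv : ∀ r : ℝ, 0 < r → HasDerivAt J (H r * J r) r := by
    intro r hr
    have := aux_J_deriv M L r hr
    rw [hMc, hLc, ← hH r hr] at this
    exact this
  have hJpos : ∀ r : ℝ, 0 < r → 0 < J r := by
    intro r hr
    exact mul_pos (pow_pos (Real.sinh_pos_iff.mpr hr) _) (pow_pos (Real.cosh_pos r) _)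
  -- Wronskian
  set W : ℝ → ℝ := fun x => J x * (f' x * h x - f x * h' x) with hWdef
  -- continuity of W on Icc
  have hcf : ContinuousOn f (Icc a b) := fun r hr => (hfd r hr).continuousAt.continuousWithinAt
  have hcf' : ContinuousOn f' (Icc a b) := fun r hr => (hfd' r hr).continuousAt.continuousWithinAt
  have hch : ContinuousOn h (Icc a b) := fun r hr => (hhd r hr).continuousAt.continuousWithinAt
  have hch' : ContinuousOn h' (Icc a b) := fun r hr => (hhd' r hr).continuousAt.continuousWithinAt
  have hJc : Continuous J := by
    exact (Real.continuous_sinh.pow _).mul (Real.continuous_cosh.pow _)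
  have hWc : ContinuousOn W (Icc a b) :=
    hJc.continuousOn.mul ((hcf'.mul hch).sub (hcf.mul hch'))
  -- derivative of W on Ioo
  have hWderiv : ∀ r ∈ Ioo a b, HasDerivAt W ((ν - μ) * (J r * (f r * h r))) r := by
    intro r hr
    have hrpos : 0 < r := lt_trans ha hr.1
    have hrIcc : r ∈ Icc a b := ⟨le_of_lt hr.1, le_of_lt hr.2⟩
    have hd := (hJderiv r hrpos).fun_mul
      (((hfd' r hrIcc).fun_mul (hhd r hrIcc)).fun_sub ((hfd r hrIcc).fun_mul (hhd' r hrIcc)))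
    refine hd.congr_deriv ?_
    have e1 := hfode r hr
    have e2 := hhode r hr
    linear_combination (J r * h r) * e1 - (J r * f r) * e2
  -- W is strictly monotone on Icc a b
  have hmono : StrictMonoOn W (Icc a b) := by
    apply strictMonoOn_of_deriv_pos (convex_Icc a b) hWc
    intro r hr
    rw [interior_Icc] at hr
    rw [(hWderiv r hr).deriv]
    have hrpos : 0 < r := lt_trans ha hr.1
    exact mul_pos (sub_pos.mpr hlt)
      (mul_pos (hJpos r hrpos) (mul_pos (hfpos r hr) (hhpos r ⟨le_of_lt hr.1, le_of_lt hr.2⟩)))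
  have hWab : W a < W b := hmono (left_mem_Icc.mpr (le_of_lt hab))
    (right_mem_Icc.mpr (le_of_lt hab)) hab
  -- sign of f' at endpoints
  have hfa' : 0 ≤ f' a := by
    have hda : HasDerivWithinAt f (f' a) (Ioi a) a :=
      (hfd a (left_mem_Icc.mpr (le_of_lt hab))).hasDerivWithinAt
    have htend : Tendsto (slope f a) (𝓝[Ioi a \ {a}] a) (𝓝 (f' a)) :=
      hasDerivWithinAt_iff_tendsto_slope.mp hda
    have hsub : Ioi a \ {a} = Ioi a := Set.diff_singleton_eq_self (by simp)
    rw [hsub] at htend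
    refine ge_of_tendsto htend ?_
    filter_upwards [Ioo_mem_nhdsGT_of_mem (Set.left_mem_Ico.mpr hab)] with x hx
    rw [slope_def_field]
    have : 0 < f x := hfpos x hx
    apply div_nonneg
    · rw [hfa]; linarith
    · linarith [hx.1]
  have hfb' : f' b ≤ 0 := by
    have hdb : HasDerivWithinAt f (f' b) (Iio b) b :=
      (hfd b (right_mem_Icc.mpr (le_of_lt hab))).hasDerivWithinAt
    have htend : Tendsto (slope f b) (𝓝[Iio b \ {b}] b) (𝓝 (f' b)) :=
      hasDerivWithinAt_iff_tendsto_slope.mp hdb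
    have hsub : Iio b \ {b} = Iio b := Set.diff_singleton_eq_self (by simp)
    rw [hsub] at htend
    refine le_of_tendsto htend ?_
    filter_upwards [Ioo_mem_nhdsLT_of_mem (Set.right_mem_Ioc.mpr hab)] with x hx
    rw [slope_def_field]
    have : 0 < f x := hfpos x hx
    apply div_nonpos_of_nonneg_of_nonpos
    · rw [hfb]; linarith
    · linarith [hx.2]
  -- endpoint values of W
  have hWa : 0 ≤ W a := by
    have : W a = J a * (f' a * h a) := by simp [hWdef, hfa]
    rw [this]
    exact mul_nonneg (le_of_lt (hJpos a ha))
      (mul_nonneg hfa' (le_of_lt (hhpos a (left_mem_Icc.mpr (le_of_lt hab)))))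
  have hWb : W b ≤ 0 := by
    have : W b = J b * (f' b * h b) := by simp [hWdef, hfb]
    rw [this]
    exact mul_nonpos_of_nonneg_of_nonpos (le_of_lt (hJpos b (lt_trans ha hab)))
      (mul_nonpos_of_nonpos_of_nonneg hfb'
        (le_of_lt (hhpos b (right_mem_Icc.mpr (le_of_lt hab)))))
  linarith
end

section
/- Let λ₁ ∈ ℝ, ε > 0, and let g : (0,ε) → ℝ be a twice continuously differentiable solution of g″ + H·g′ + λ₁·g = 0 on (0,ε) with g(r) → 1 as r → 0⁺. Then (g(r) − 1)/r² → −λ₁/(2kn) as r → 0⁺; that is, g(r) = 1 − (λ₁/(2kn))·r² + o(r²) at r = 0. -/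
open Real Filter Set MeasureTheory intervalIntegral

lemma stmt4_sinh_le {x : ℝ} (hx : 0 ≤ x) : Real.sinh x ≤ x * Real.cosh x := by
  have hd : ∀ y : ℝ, HasDerivAt (fun t => t * Real.cosh t - Real.sinh t) (y * Real.sinh y) y := by
    intro y
    have h1 := ((hasDerivAt_id y).fun_mul (Real.hasDerivAt_cosh y)).fun_sub (Real.hasDerivAt_sinh y)
    refine h1.congr_deriv ?_; simp only [id]; ring
  have hmono : MonotoneOn (fun t => t * Real.cosh t - Real.sinh t) (Set.Ici 0) := by
    apply monotoneOn_of_deriv_nonneg (convex_Ici 0)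
    · exact (Continuous.continuousOn (by continuity))
    · intro y hy
      exact (hd y).differentiableAt.differentiableWithinAt
    · intro y hy
      rw [interior_Ici] at hy
      rw [(hd y).deriv]
      exact mul_nonneg (le_of_lt hy) (le_of_lt (Real.sinh_pos_iff.mpr hy))
  have := hmono (Set.self_mem_Ici) hx hx
  simp only [Real.cosh_zero, Real.sinh_zero, zero_mul, sub_zero] at this
  linarith

lemma stmt4_cosh_le_two {x : ℝ} (hx : |x| ≤ 1) : Real.cosh x ≤ 2 := by
  have h1 : Real.cosh x ≤ Real.cosh 1 := by
    rw [Real.cosh_le_cosh]; simpa using hx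
  have h2 : Real.cosh 1 = (Real.exp 1 + Real.exp (-1)) / 2 := by
    rw [Real.cosh_eq]
  have h3 : Real.exp 1 < 2.7182818286 := Real.exp_one_lt_d9
  have h4 : Real.exp (-1) ≤ 1 := Real.exp_le_one_iff.mpr (by norm_num)
  linarith

lemma stmt4_sinh_div : Tendsto (fun r => Real.sinh r / r) (nhdsWithin 0 (Set.Ioi 0)) (nhds 1) := by
  have h := Real.hasDerivAt_sinh (0 : ℝ)
  rw [hasDerivAt_iff_tendsto_slope] at h
  have h2 : Tendsto (slope Real.sinh 0) (nhdsWithin 0 (Set.Ioi 0)) (nhds 1) := by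
    rw [Real.cosh_zero] at h
    exact h.mono_left (nhdsWithin_mono 0 (fun x hx => ne_of_gt hx))
  refine h2.congr (fun x => ?_)
  simp [slope_def_field, Real.sinh_zero]

lemma stmt4_rho_ratio (p q : ℕ) :
    Tendsto (fun r => Real.sinh r ^ p * Real.cosh r ^ q / r ^ p)
      (nhdsWithin 0 (Set.Ioi 0)) (nhds 1) := by
  have h1 : Tendsto (fun r => (Real.sinh r / r) ^ p * Real.cosh r ^ q)
      (nhdsWithin 0 (Set.Ioi 0)) (nhds 1) := by
    have hc : Tendsto (fun r : ℝ => Real.cosh r ^ q) (nhdsWithin 0 (Set.Ioi 0)) (nhds 1) := by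
      have h0 : Tendsto Real.cosh (nhdsWithin (0:ℝ) (Set.Ioi 0)) (nhds 1) := by
        have := (Real.continuous_cosh.tendsto 0).mono_left
          (nhdsWithin_le_nhds (s := Set.Ioi (0:ℝ)))
        simpa using this
      simpa using h0.pow q
    have := (stmt4_sinh_div.pow p).mul hc
    simpa using this
  refine h1.congr (fun x => ?_)
  rw [div_pow, div_mul_eq_mul_div]


lemma stmt4_rho_deriv (m1 j : ℕ) {r : ℝ} (hr : 0 < r) :
    HasDerivAt (fun t => Real.sinh t ^ (m1 + 1) * Real.cosh t ^ (j + 1))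
      ((((m1 : ℝ) + 1) * (Real.cosh r / Real.sinh r) + ((j : ℝ) + 1) * Real.tanh r) *
        (Real.sinh r ^ (m1 + 1) * Real.cosh r ^ (j + 1))) r := by
  have hs : Real.sinh r ≠ 0 := ne_of_gt (Real.sinh_pos_iff.mpr hr)
  have hc : Real.cosh r ≠ 0 := ne_of_gt (Real.cosh_pos r)
  have d1 : HasDerivAt (fun t => Real.sinh t ^ (m1 + 1))
      (((m1 : ℝ) + 1) * Real.sinh r ^ m1 * Real.cosh r) r := by
    have := (Real.hasDerivAt_sinh r).fun_pow (m1 + 1)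
    simpa [Nat.add_sub_cancel] using this
  have d2 : HasDerivAt (fun t => Real.cosh t ^ (j + 1))
      (((j : ℝ) + 1) * Real.cosh r ^ j * Real.sinh r) r := by
    have := (Real.hasDerivAt_cosh r).fun_pow (j + 1)
    simpa [Nat.add_sub_cancel] using this
  have h := d1.fun_mul d2
  refine h.congr_deriv ?_
  rw [Real.tanh_eq_sinh_div_cosh]
  field_simp
  ring

/-- Asymptotic expansion at r = 0 of a bounded solution of
g″ + H·g′ + λ₁·g = 0 with g(r) → 1 as r → 0⁺:
(g(r) − 1)/r² → −λ₁/(2kn), i.e. g(r) = 1 − (λ₁/(2kn))·r² + o(r²). -/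
theorem stmt_4
    (k n : ℕ) (hk : k = 2 ∨ k = 4 ∨ k = 8) (hn : 2 ≤ n) (hk8 : k = 8 → n = 2)
    (H : ℝ → ℝ)
    (hH : ∀ r : ℝ, 0 < r →
      H r = ((k : ℝ) * n - 1) * (Real.cosh r / Real.sinh r) + ((k : ℝ) - 1) * Real.tanh r)
    (lam1 ε : ℝ) (hε : 0 < ε)
    (g g' g'' : ℝ → ℝ)
    (hgd : ∀ r ∈ Set.Ioo (0 : ℝ) ε, HasDerivAt g (g' r) r)
    (hgd' : ∀ r ∈ Set.Ioo (0 : ℝ) ε, HasDerivAt g' (g'' r) r)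
    (hgc : ContinuousOn g'' (Set.Ioo 0 ε))
    (hgode : ∀ r ∈ Set.Ioo (0 : ℝ) ε, g'' r + H r * g' r + lam1 * g r = 0)
    (hglim : Filter.Tendsto g (nhdsWithin 0 (Set.Ioi 0)) (nhds 1)) :
    Filter.Tendsto (fun r => (g r - 1) / r ^ 2) (nhdsWithin 0 (Set.Ioi 0))
      (nhds (-(lam1 / (2 * ((k : ℝ) * n))))) := by
  -- arithmetic facts
  have hk2 : 2 ≤ k := by rcases hk with h | h | h <;> omega
  have hkn4 : 4 ≤ k * n := le_trans (by norm_num) (Nat.mul_le_mul hk2 hn)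
  set m : ℕ := k * n - 1 with hm_def
  have hm1 : m + 1 = k * n := by omega
  have hm3 : 3 ≤ m := by omega
  have hmK : (m : ℝ) + 1 = (k : ℝ) * n := by
    rw [← Nat.cast_mul, ← hm1]; push_cast; ring
  -- the integrating factor
  set ρ : ℝ → ℝ := fun t => Real.sinh t ^ m * Real.cosh t ^ (k - 1) with hρ_def
  have hρcont : Continuous ρ := (Real.continuous_sinh.pow m).mul (Real.continuous_cosh.pow (k - 1))
  have hρpos : ∀ t : ℝ, 0 < t → 0 < ρ t := fun t ht =>
    mul_pos (pow_pos (Real.sinh_pos_iff.mpr ht) m) (pow_pos (Real.cosh_pos t) (k - 1))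
  have hρd : ∀ t : ℝ, 0 < t → HasDerivAt ρ (H t * ρ t) t := by
    intro t ht
    have h1 : m = (m - 1) + 1 := by omega
    have h2 : k - 1 = (k - 2) + 1 := by omega
    have h := stmt4_rho_deriv (m - 1) (k - 2) ht
    rw [hH t ht]
    have e1 : ((m - 1 : ℕ) : ℝ) + 1 = (k : ℝ) * n - 1 := by
      have : ((m - 1 : ℕ) : ℝ) = (m : ℝ) - 1 := by
        have : 1 ≤ m := by omega
        push_cast [this]; ring
      rw [this]; linarith [hmK]
    have e2 : ((k - 2 : ℕ) : ℝ) + 1 = (k : ℝ) - 1 := by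
      have : ((k - 2 : ℕ) : ℝ) = (k : ℝ) - 2 := by
        have : 2 ≤ k := hk2
        push_cast [this]; ring
      rw [this]; ring
    have hρeq : ρ = fun t => Real.sinh t ^ ((m - 1) + 1) * Real.cosh t ^ ((k - 2) + 1) := by
      rw [hρ_def, ← h1, ← h2]
    rw [hρeq]
    convert h using 2 <;> rw [e1, e2]
  -- setup
  set b : ℝ := ε / 2 with hb_def
  have hb0 : 0 < b := by positivity
  have hbε : b < ε := by linarith
  have hbmem : b ∈ Set.Ioo (0 : ℝ) ε := ⟨hb0, hbε⟩
  set ψ : ℝ → ℝ := fun t => ρ t * g t with hψ_def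
  set φ : ℝ → ℝ := fun t => ρ t * g' t with hφ_def
  have hgcont : ∀ t ∈ Set.Ioo (0 : ℝ) ε, ContinuousAt g t := fun t ht => (hgd t ht).continuousAt
  have hg'cont : ∀ t ∈ Set.Ioo (0 : ℝ) ε, ContinuousAt g' t := fun t ht => (hgd' t ht).continuousAt
  have hψcontAt : ∀ t ∈ Set.Ioo (0 : ℝ) ε, ContinuousAt ψ t := fun t ht =>
    hρcont.continuousAt.mul (hgcont t ht)
  have hψ0 : Tendsto ψ (nhdsWithin 0 (Set.Ioi 0)) (nhds 0) := by
    have hρ0 : Tendsto ρ (nhdsWithin (0:ℝ) (Set.Ioi 0)) (nhds 0) := by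
      have := (hρcont.tendsto 0).mono_left (nhdsWithin_le_nhds (s := Set.Ioi (0:ℝ)))
      have hρz : ρ 0 = 0 := by
        simp [hρ_def, Real.sinh_zero, zero_pow (by omega : m ≠ 0)]
      rwa [hρz] at this
    simpa using hρ0.mul hglim
  have hψz : ψ 0 = 0 := by
    simp [hψ_def, hρ_def, Real.sinh_zero, zero_pow (by omega : m ≠ 0)]
  have hψIcc : ContinuousOn ψ (Set.Icc 0 b) := by
    intro t ht
    rcases eq_or_lt_of_le ht.1 with h0 | h0
    · have h1 : ContinuousWithinAt ψ (Set.Ioi 0) 0 := by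
        rw [ContinuousWithinAt, hψz]; exact hψ0
      have h2 : ContinuousWithinAt ψ (insert 0 (Set.Ioi 0)) 0 := h1.insert
      rw [← h0]
      exact h2.mono (fun x hx => by
        rcases eq_or_lt_of_le hx.1 with h | h
        · exact Or.inl h.symm
        · exact Or.inr h)
    · exact (hψcontAt t ⟨h0, lt_of_le_of_lt ht.2 hbε⟩).continuousWithinAt
  set F : ℝ → ℝ := fun r => ∫ t in (0:ℝ)..r, ψ t with hF_def
  have hψint : ∀ x ∈ Set.Icc (0:ℝ) b, ∀ y ∈ Set.Icc (0:ℝ) b, IntervalIntegrable ψ volume x y := by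
    intro x hx y hy
    apply ContinuousOn.intervalIntegrable
    exact hψIcc.mono (Set.uIcc_subset_Icc hx hy)
  have hFcont : ContinuousOn F (Set.Icc 0 b) := by
    have h1 : IntegrableOn ψ (Set.uIcc 0 b) := by
      rw [Set.uIcc_of_le hb0.le]; exact hψIcc.integrableOn_Icc
    have := intervalIntegral.continuousOn_primitive_interval (μ := volume) (a := 0) (b := b) h1
    rwa [Set.uIcc_of_le hb0.le] at this
  have hF0 : Tendsto F (nhdsWithin 0 (Set.Ioi 0)) (nhds 0) := by
    have h1 := (hFcont 0 ⟨le_refl 0, hb0.le⟩)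
    have h2 : F 0 = 0 := intervalIntegral.integral_same
    have h3 : Tendsto F (nhdsWithin 0 (Set.Icc 0 b)) (nhds 0) := by
      have := h1.tendsto
      rwa [h2] at this
    have h4 : nhdsWithin (0:ℝ) (Set.Ioi 0) = nhdsWithin 0 (Set.Ioo 0 b) :=
      (nhdsWithin_Ioo_eq_nhdsGT hb0).symm
    rw [h4]
    exact h3.mono_left (nhdsWithin_mono 0 Set.Ioo_subset_Icc_self)
  have hFd : ∀ r ∈ Set.Ioo (0:ℝ) b, HasDerivAt F (ψ r) r := by
    intro r hr
    have hrε : r ∈ Set.Ioo (0:ℝ) ε := ⟨hr.1, lt_trans hr.2 hbε⟩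
    apply intervalIntegral.integral_hasDerivAt_right
      (hψint 0 ⟨le_refl 0, hb0.le⟩ r ⟨hr.1.le, hr.2.le⟩)
    · exact ContinuousOn.stronglyMeasurableAtFilter isOpen_Ioo
        (fun t ht => (hψcontAt t ht).continuousWithinAt) _ hrε
    · exact hψcontAt r hrε
  -- derivative of φ = ρ * g'
  have hφd : ∀ t ∈ Set.Ioo (0:ℝ) ε, HasDerivAt φ (-lam1 * ψ t) t := by
    intro t ht
    have h1 := (hρd t ht.1).mul (hgd' t ht)
    have h2 : H t * ρ t * g' t + ρ t * g'' t = -lam1 * ψ t := by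
      have h3 := hgode t ht
      simp only [hψ_def]
      linear_combination (ρ t) * h3
    rwa [h2] at h1
  have hφcontOn : ContinuousOn φ (Set.Ioo 0 ε) :=
    fun t ht => (hρcont.continuousAt.mul (hg'cont t ht)).continuousWithinAt
  -- FTC for φ on [r, b]
  have hφeq : ∀ r ∈ Set.Ioc (0:ℝ) b, φ r = φ b + lam1 * (F b - F r) := by
    intro r hr
    have hsub : Set.uIcc r b ⊆ Set.Ioo 0 ε := by
      rw [Set.uIcc_of_le hr.2]
      intro t ht
      exact ⟨lt_of_lt_of_le hr.1 ht.1, lt_of_le_of_lt ht.2 hbε⟩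
    have h1 : ∫ t in r..b, (-lam1 * ψ t) = φ b - φ r := by
      apply intervalIntegral.integral_eq_sub_of_hasDerivAt
      · exact fun t ht => hφd t (hsub ht)
      · apply ContinuousOn.intervalIntegrable
        exact (continuousOn_const.mul
          (fun t ht => (hψcontAt t (hsub ht)).continuousWithinAt))
    have h2 : ∫ t in r..b, (-lam1 * ψ t) = -lam1 * ∫ t in r..b, ψ t :=
      intervalIntegral.integral_const_mul _ _
    have h3 : F r + ∫ t in r..b, ψ t = F b := by
      apply intervalIntegral.integral_add_adjacent_intervals
      · exact hψint 0 ⟨le_refl 0, hb0.le⟩ r ⟨hr.1.le, hr.2⟩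
      · exact hψint r ⟨hr.1.le, hr.2⟩ b ⟨hb0.le, le_refl b⟩
    have h4 : ∫ t in r..b, ψ t = F b - F r := by linarith
    rw [h2, h4] at h1
    linarith
  set L : ℝ := φ b + lam1 * F b with hL_def
  have hφlim : Tendsto φ (nhdsWithin 0 (Set.Ioi 0)) (nhds L) := by
    have h1 : Tendsto (fun r => φ b + lam1 * (F b - F r)) (nhdsWithin 0 (Set.Ioi 0))
        (nhds L) := by
      have h2 : Tendsto (fun r => F b - F r) (nhdsWithin 0 (Set.Ioi 0)) (nhds (F b)) := by
        simpa using (tendsto_const_nhds (x := F b)).sub hF0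
      have := (tendsto_const_nhds (x := φ b)).add ((tendsto_const_nhds (x := lam1)).mul h2)
      simpa [hL_def] using this
    refine h1.congr' ?_
    filter_upwards [Ioo_mem_nhdsGT_of_mem ⟨le_refl (0:ℝ), hb0⟩] with r hr
    exact (hφeq r ⟨hr.1, hr.2.le⟩).symm
  -- L = 0
  have hL0 : L = 0 := by
    by_contra hL
    have hLpos : 0 < |L| := abs_pos.mpr hL
    -- find c ≤ min(b,1) with |φ - L| ≤ |L|/2 on (0,c]
    have hev : ∀ᶠ r in nhdsWithin (0:ℝ) (Set.Ioi 0),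
        |φ r - L| ≤ |L| / 2 ∧ r ∈ Set.Ioo (0:ℝ) b ∧ r < 1 := by
      have e1 : ∀ᶠ r in nhdsWithin (0:ℝ) (Set.Ioi 0), |φ r - L| ≤ |L| / 2 := by
        have := hφlim (Metric.closedBall_mem_nhds L (by positivity : (0:ℝ) < |L|/2))
        filter_upwards [this] with r hr
        simpa [Metric.mem_closedBall, Real.dist_eq] using hr
      have e2 : ∀ᶠ r in nhdsWithin (0:ℝ) (Set.Ioi 0), r ∈ Set.Ioo (0:ℝ) b :=
        Ioo_mem_nhdsGT_of_mem ⟨le_refl (0:ℝ), hb0⟩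
      have e3 : ∀ᶠ r in nhdsWithin (0:ℝ) (Set.Ioi 0), r < 1 := by
        have : Set.Ioo (0:ℝ) 1 ∈ nhdsWithin (0:ℝ) (Set.Ioi 0) :=
          Ioo_mem_nhdsGT_of_mem ⟨le_refl (0:ℝ), one_pos⟩
        filter_upwards [this] with r hr using hr.2
      filter_upwards [e1, e2, e3] with r h1 h2 h3 using ⟨h1, h2, h3⟩
    obtain ⟨c', hc', hIoc⟩ := mem_nhdsGT_iff_exists_Ioc_subset.mp hev
    have hc'0 : (0:ℝ) < c' := hc'
    set c : ℝ := c' with hc_def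
    have hcself := hIoc (Set.right_mem_Ioc.mpr hc'0)
    have hc0 : (0:ℝ) < c := hc'0
    have hcb : c < b := hcself.2.1.2
    have hc1 : c < 1 := hcself.2.2
    have hcε : c < ε := lt_trans hcb hbε
    set C : ℝ := 2 ^ m * 2 ^ (k - 1) with hC_def
    have hCpos : 0 < C := by positivity
    -- upper bound for ρ on (0,c]
    have hρub : ∀ t ∈ Set.Ioc (0:ℝ) c, ρ t ≤ C * t ^ 2 := by
      intro t ht
      have ht0 : 0 < t := ht.1
      have ht1 : t ≤ 1 := le_of_lt (lt_of_le_of_lt ht.2 hc1)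
      have hcosh2 : Real.cosh t ≤ 2 := stmt4_cosh_le_two (by rw [abs_of_pos ht0]; exact ht1)
      have hsinh : Real.sinh t ≤ 2 * t := by
        have := stmt4_sinh_le ht0.le
        nlinarith [this, hcosh2, ht0]
      have h1 : Real.sinh t ^ m ≤ (2 * t) ^ m :=
        pow_le_pow_left₀ (le_of_lt (Real.sinh_pos_iff.mpr ht0)) hsinh m
      have h2 : Real.cosh t ^ (k - 1) ≤ 2 ^ (k - 1) :=
        pow_le_pow_left₀ (le_of_lt (Real.cosh_pos t)) hcosh2 (k - 1)
      have h3 : ρ t ≤ (2 * t) ^ m * 2 ^ (k - 1) := by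
        apply mul_le_mul h1 h2 (pow_nonneg (le_of_lt (Real.cosh_pos t)) _)
        positivity
      have h4 : (2 * t) ^ m = 2 ^ m * t ^ m := mul_pow 2 t m
      have h5 : t ^ m ≤ t ^ 2 := pow_le_pow_of_le_one ht0.le ht1 (by omega)
      calc ρ t ≤ (2 * t) ^ m * 2 ^ (k - 1) := h3
        _ = 2 ^ m * 2 ^ (k - 1) * t ^ m := by rw [h4]; ring
        _ ≤ 2 ^ m * 2 ^ (k - 1) * t ^ 2 := by
            apply mul_le_mul_of_nonneg_left h5; positivity
        _ = C * t ^ 2 := rfl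
    -- the key lower bound for |g c - g s|
    have key : ∀ s ∈ Set.Ioo (0:ℝ) c,
        |L| / 2 * (C⁻¹ * (s⁻¹ - c⁻¹)) ≤ |g c - g s| := by
      intro s hs
      have hs0 : 0 < s := hs.1
      have hsc : s < c := hs.2
      have hsub2 : Set.Icc s c ⊆ Set.Ioc (0:ℝ) c := fun t ht => ⟨lt_of_lt_of_le hs0 ht.1, ht.2⟩
      have hsubε : Set.Icc s c ⊆ Set.Ioo (0:ℝ) ε := fun t ht =>
        ⟨lt_of_lt_of_le hs0 ht.1, lt_of_le_of_lt ht.2 hcε⟩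
      have hρne : ∀ t ∈ Set.Icc s c, ρ t ≠ 0 := fun t ht =>
        ne_of_gt (hρpos t (lt_of_lt_of_le hs0 ht.1))
      have hρcontOn : ContinuousOn (fun t => (ρ t)⁻¹) (Set.Icc s c) :=
        (hρcont.continuousOn).inv₀ hρne
      have huIcc : Set.uIcc s c = Set.Icc s c := Set.uIcc_of_le hsc.le
      have hIint : IntervalIntegrable (fun t => (ρ t)⁻¹) volume s c := by
        apply ContinuousOn.intervalIntegrable; rwa [huIcc]
      set I : ℝ := ∫ t in s..c, (ρ t)⁻¹ with hI_def
      have hInn : 0 ≤ I := by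
        apply intervalIntegral.integral_nonneg hsc.le
        intro t ht
        exact inv_nonneg.mpr (le_of_lt (hρpos t (lt_of_lt_of_le hs0 ht.1)))
      -- g c - g s = ∫ g'
      have h1 : ∫ t in s..c, g' t = g c - g s := by
        refine intervalIntegral.integral_eq_sub_of_hasDerivAt (f := g) (f' := g') ?_ ?_
        · intro t ht; rw [huIcc] at ht; exact hgd t (hsubε ht)
        · apply ContinuousOn.intervalIntegrable
          rw [huIcc]
          exact fun t ht => ((hg'cont t (hsubε ht))).continuousWithinAt
      -- split g' = L/ρ + (φ - L)/ρ
      have h2 : ∫ t in s..c, g' t =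
          L * I + ∫ t in s..c, (φ t - L) * (ρ t)⁻¹ := by
        have hsplit : ∀ t ∈ Set.Icc s c,
            g' t = L * (ρ t)⁻¹ + (φ t - L) * (ρ t)⁻¹ := by
          intro t ht
          have hne := hρne t ht
          field_simp [hφ_def]
          simp only [hφ_def]; ring
        have hφint : IntervalIntegrable (fun t => (φ t - L) * (ρ t)⁻¹) volume s c := by
          apply ContinuousOn.intervalIntegrable
          rw [huIcc]
          exact ((hφcontOn.mono hsubε).sub continuousOn_const).mul hρcontOn
        have hLint : IntervalIntegrable (fun t => L * (ρ t)⁻¹) volume s c :=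
          (hIint.const_mul L)
        rw [intervalIntegral.integral_congr (g := fun t => L * (ρ t)⁻¹ + (φ t - L) * (ρ t)⁻¹)
          (by intro t ht; rw [huIcc] at ht; exact hsplit t ht)]
        rw [intervalIntegral.integral_add hLint hφint, intervalIntegral.integral_const_mul]
      -- bound the error term
      have h3 : |∫ t in s..c, (φ t - L) * (ρ t)⁻¹| ≤ |L| / 2 * I := by
        have hb1 : ∀ t ∈ Set.Icc s c, |(φ t - L) * (ρ t)⁻¹| ≤ |L| / 2 * (ρ t)⁻¹ := by
          intro t ht
          have htc : t ∈ Set.Ioc (0:ℝ) c := hsub2 ht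
          have hφb : |φ t - L| ≤ |L| / 2 := (hIoc htc).1
          have hρt : 0 < ρ t := hρpos t htc.1
          rw [abs_mul, abs_inv, abs_of_pos hρt]
          exact mul_le_mul_of_nonneg_right hφb (inv_nonneg.mpr hρt.le)
        have := intervalIntegral.norm_integral_le_of_norm_le
          (f := fun t => (φ t - L) * (ρ t)⁻¹)
          (g := fun t => |L| / 2 * (ρ t)⁻¹) (μ := volume)
          (a := s) (b := c) hsc.le ?_ (hIint.const_mul _)
        · rw [Real.norm_eq_abs, intervalIntegral.integral_const_mul, ← hI_def] at this
          exact this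
        · apply MeasureTheory.ae_of_all
          intro t ht
          exact (Real.norm_eq_abs _) ▸ hb1 t (Set.Ioc_subset_Icc_self ht)
      -- conclude lower bound via triangle inequality
      have h4 : |L| / 2 * I ≤ |g c - g s| := by
        have e1 : g c - g s = L * I + ∫ t in s..c, (φ t - L) * (ρ t)⁻¹ := by
          rw [← h1, h2]
        have e2 : |L * I| = |L| * I := by rw [abs_mul, abs_of_nonneg hInn]
        have := abs_sub_abs_le_abs_sub (L * I) (-(∫ t in s..c, (φ t - L) * (ρ t)⁻¹))
        rw [abs_neg, sub_neg_eq_add, ← e1, e2] at this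
        calc |L| / 2 * I = |L| * I - |L| / 2 * I := by ring
          _ ≤ |L| * I - |∫ t in s..c, (φ t - L) * (ρ t)⁻¹| := by linarith
          _ ≤ |g c - g s| := this
      -- lower bound I
      have h5 : C⁻¹ * (s⁻¹ - c⁻¹) ≤ I := by
        have hint2 : ∫ t in s..c, (t ^ 2)⁻¹ = s⁻¹ - c⁻¹ := by
          have : ∫ t in s..c, (t ^ 2)⁻¹ = (fun t : ℝ => -t⁻¹) c - (fun t : ℝ => -t⁻¹) s := by
            refine intervalIntegral.integral_eq_sub_of_hasDerivAt
              (f := fun t : ℝ => -t⁻¹) (f' := fun t : ℝ => (t ^ 2)⁻¹) ?_ ?_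
            · intro t ht
              rw [huIcc] at ht
              have htne : t ≠ 0 := ne_of_gt (lt_of_lt_of_le hs0 ht.1)
              simpa using (hasDerivAt_inv htne).fun_neg
            · apply ContinuousOn.intervalIntegrable
              rw [huIcc]
              exact ContinuousOn.inv₀ (continuousOn_pow 2)
                (fun t ht => pow_ne_zero 2 (ne_of_gt (lt_of_lt_of_le hs0 ht.1)))
          rw [this]; ring
        have hmono : ∫ t in s..c, C⁻¹ * (t ^ 2)⁻¹ ≤ I := by
          apply intervalIntegral.integral_mono_on hsc.le
          · apply ContinuousOn.intervalIntegrable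
            rw [huIcc]
            exact continuousOn_const.mul (ContinuousOn.inv₀ (continuousOn_pow 2)
              (fun t ht => pow_ne_zero 2 (ne_of_gt (lt_of_lt_of_le hs0 ht.1))))
          · exact hIint
          · intro t ht
            have ht0 : 0 < t := lt_of_lt_of_le hs0 ht.1
            have hub := hρub t (hsub2 ht)
            have hρt : 0 < ρ t := hρpos t ht0
            rw [← mul_inv]
            exact inv_anti₀ hρt hub
        rw [intervalIntegral.integral_const_mul, hint2] at hmono
        exact hmono
      calc |L| / 2 * (C⁻¹ * (s⁻¹ - c⁻¹)) ≤ |L| / 2 * I := by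
            apply mul_le_mul_of_nonneg_left h5; positivity
        _ ≤ |g c - g s| := h4
    -- contradiction: RHS bounded, LHS → ∞
    have h7 : Tendsto (fun s : ℝ => |L| / 2 * (C⁻¹ * (s⁻¹ - c⁻¹)))
        (nhdsWithin 0 (Set.Ioi 0)) atTop := by
      have t1 : Tendsto (fun s : ℝ => s⁻¹) (nhdsWithin 0 (Set.Ioi 0)) atTop :=
        tendsto_inv_nhdsGT_zero
      have t2 : Tendsto (fun s : ℝ => s⁻¹ - c⁻¹) (nhdsWithin 0 (Set.Ioi 0)) atTop :=
        t1.atTop_add tendsto_const_nhds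
      have t3 : Tendsto (fun s : ℝ => C⁻¹ * (s⁻¹ - c⁻¹)) (nhdsWithin 0 (Set.Ioi 0)) atTop :=
        t2.const_mul_atTop (by positivity)
      exact t3.const_mul_atTop (by positivity)
    have h8 : ∀ᶠ s in nhdsWithin (0:ℝ) (Set.Ioi 0), |g c - g s| ≤ |g c - 1| + 1 := by
      have : ∀ᶠ s in nhdsWithin (0:ℝ) (Set.Ioi 0), |g s - 1| ≤ 1 := by
        have := hglim (Metric.closedBall_mem_nhds 1 one_pos)
        filter_upwards [this] with s hsx
        simpa [Metric.mem_closedBall, Real.dist_eq] using hsx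
      filter_upwards [this] with s hs1
      have : |g c - g s| ≤ |g c - 1| + |g s - 1| := by
        have := abs_sub (g c - 1) (g s - 1)
        calc |g c - g s| = |(g c - 1) - (g s - 1)| := by ring_nf
          _ ≤ |g c - 1| + |g s - 1| := abs_sub _ _
      linarith
    have h9 : ∀ᶠ s in nhdsWithin (0:ℝ) (Set.Ioi 0),
        |g c - 1| + 1 < |L| / 2 * (C⁻¹ * (s⁻¹ - c⁻¹)) :=
      h7.eventually_gt_atTop _
    have h10 : ∀ᶠ s in nhdsWithin (0:ℝ) (Set.Ioi 0), s ∈ Set.Ioo (0:ℝ) c :=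
      Ioo_mem_nhdsGT_of_mem ⟨le_refl (0:ℝ), hc0⟩
    obtain ⟨s, hs1, hs2, hs3⟩ := (h8.and (h9.and h10)).exists
    have := key s hs3
    linarith [hs1, hs2]
  -- with L = 0 : φ r = -lam1 * F r on (0, b]
  have hφF : ∀ r ∈ Set.Ioc (0:ℝ) b, φ r = -(lam1 * F r) := by
    intro r hr
    have := hφeq r hr
    rw [hL_def] at hL0
    linarith [this]
  -- L'Hopital 1 : F r / r^(m+1) → 1/(m+1)
  have hFlim : Tendsto (fun r => F r / r ^ (m + 1)) (nhdsWithin 0 (Set.Ioi 0))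
      (nhds (((m : ℝ) + 1))⁻¹) := by
    apply HasDerivAt.lhopital_zero_right_on_Ioo hb0 hFd
      (f' := ψ) (g' := fun x => ((m : ℝ) + 1) * x ^ m)
    · intro x hx
      have := hasDerivAt_pow (m + 1) x
      simpa [Nat.add_sub_cancel] using this
    · intro x hx
      have : (0:ℝ) < x ^ m := pow_pos hx.1 m
      positivity
    · exact hF0
    · have := ((continuous_pow (m+1)).tendsto 0).mono_left
        (nhdsWithin_le_nhds (s := Set.Ioi (0:ℝ)))
      simpa using this
    · -- ψ x / ((m+1) x^m) → 1/(m+1)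
      have h1 : Tendsto (fun x => (Real.sinh x ^ m * Real.cosh x ^ (k-1) / x ^ m) * g x *
          ((m : ℝ) + 1)⁻¹) (nhdsWithin 0 (Set.Ioi 0)) (nhds (((m : ℝ) + 1))⁻¹) := by
        have := (stmt4_rho_ratio m (k-1)).mul hglim
        have h2 := this.mul (tendsto_const_nhds (x := ((m : ℝ) + 1)⁻¹))
        simpa using h2
      refine h1.congr' ?_
      filter_upwards [self_mem_nhdsWithin] with x hx
      have hx0 : (0:ℝ) < x := hx
      have hxm : x ^ m ≠ 0 := ne_of_gt (pow_pos hx0 m)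
      have hm1ne : ((m : ℝ) + 1) ≠ 0 := by positivity
      simp only [hψ_def, hρ_def, div_eq_mul_inv, mul_inv]
      ring
  -- limit of g' r / (2 r)
  have hmain : Tendsto (fun r => g' r / (2 * r)) (nhdsWithin 0 (Set.Ioi 0))
      (nhds (-(lam1 / (2 * ((k : ℝ) * n))))) := by
    have hinv : Tendsto (fun r => r ^ m / ρ r) (nhdsWithin 0 (Set.Ioi 0)) (nhds 1) := by
      have h1 := (stmt4_rho_ratio m (k-1)).inv₀ (by norm_num)
      have h2 : Tendsto (fun r => (Real.sinh r ^ m * Real.cosh r ^ (k-1) / r ^ m)⁻¹)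
          (nhdsWithin 0 (Set.Ioi 0)) (nhds 1) := by simpa using h1
      refine h2.congr (fun x => ?_)
      rw [inv_div]
    have h3 : Tendsto (fun r => (-lam1 / 2) * (F r / r ^ (m + 1)) * (r ^ m / ρ r))
        (nhdsWithin 0 (Set.Ioi 0)) (nhds (-(lam1 / (2 * ((k : ℝ) * n))))) := by
      have := ((tendsto_const_nhds (x := -lam1 / 2)).mul hFlim).mul hinv
      have heq : -lam1 / 2 * ((m : ℝ) + 1)⁻¹ * 1 = -(lam1 / (2 * ((k : ℝ) * n))) := by
        have hKne : ((k:ℝ) * n) ≠ 0 := by rw [← hmK]; positivity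
        rw [hmK, mul_one, div_eq_mul_inv, div_eq_mul_inv, mul_inv]
        ring
      rwa [heq] at this
    refine h3.congr' ?_
    filter_upwards [Ioo_mem_nhdsGT_of_mem ⟨le_refl (0:ℝ), hb0⟩] with r hr
    have hr0 : (0:ℝ) < r := hr.1
    have hρr : ρ r ≠ 0 := ne_of_gt (hρpos r hr0)
    have hrne : r ≠ 0 := ne_of_gt hr0
    have hg'r : g' r = -(lam1 * F r) / ρ r := by
      have h4 := hφF r ⟨hr.1, hr.2.le⟩
      rw [hφ_def] at h4
      field_simp at h4 ⊢
      linarith [h4]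
    rw [hg'r]
    rw [pow_succ]
    field_simp
  -- final L'Hopital
  apply HasDerivAt.lhopital_zero_right_on_Ioo hb0
    (f := fun r => g r - 1) (f' := g') (g' := fun x => 2 * x)
  · intro x hx
    exact (hgd x ⟨hx.1, lt_trans hx.2 hbε⟩).sub_const 1
  · intro x hx
    have := hasDerivAt_pow 2 x
    simpa using this
  · intro x hx
    exact ne_of_gt (mul_pos two_pos hx.1)
  · have h0 := hglim.sub (tendsto_const_nhds (x := (1:ℝ)))
    rw [sub_self] at h0
    exact h0
  · have h0 := ((continuous_pow 2).tendsto (0:ℝ)).mono_left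
      (nhdsWithin_le_nhds (s := Set.Ioi (0:ℝ)))
    rw [zero_pow (by norm_num : (2:ℕ) ≠ 0)] at h0
    exact h0
  · exact hmain
end

section
/- λ₂ − λ₁ ≥ Λ(R): the gap between the first two Dirichlet eigenvalues of a geodesic ball of radius R in 𝕂ℍⁿ is at least the first nonzero Laplace eigenvalue Λ(R) of its boundary sphere. -/
set_option maxHeartbeats 1000000


/-- λ₂ − λ₁ ≥ Λ(R): the gap between the first two Dirichlet eigenvalues
of a geodesic ball of radius R in 𝕂ℍⁿ is at least the first nonzero Laplace
eigenvalue Λ(R) of its boundary sphere. -/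
theorem stmt_6
    (k n : ℕ) (hk : k = 2 ∨ k = 4 ∨ k = 8) (hn : 2 ≤ n) (hk8 : k = 8 → n = 2)
    (H : ℝ → ℝ)
    (hH : ∀ r : ℝ, 0 < r →
      H r = ((k : ℝ) * n - 1) * (Real.cosh r / Real.sinh r) + ((k : ℝ) - 1) * Real.tanh r)
    (R lam1 : ℝ) (hR : 0 < R) (hlam1 : 0 < lam1)
    (g₁ g₁' g₁'' : ℝ → ℝ)
    (hg₁d : ∀ r : ℝ, 0 < r → HasDerivAt g₁ (g₁' r) r)
    (hg₁d' : ∀ r : ℝ, 0 < r → HasDerivAt g₁' (g₁'' r) r)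
    (hg₁c : ContinuousOn g₁'' (Set.Ioi 0))
    (hg₁ode : ∀ r : ℝ, 0 < r → g₁'' r + H r * g₁' r + lam1 * g₁ r = 0)
    (hg₁pos : ∀ r ∈ Set.Ioo (0 : ℝ) R, 0 < g₁ r)
    (hg₁R : g₁ R = 0)
    (hg₁lim : Filter.Tendsto g₁ (nhdsWithin 0 (Set.Ioi 0)) (nhds 1))
    (hg₁'lim : Filter.Tendsto g₁' (nhdsWithin 0 (Set.Ioi 0)) (nhds 0))
    (Λ : ℝ → ℝ)
    (hΛ : ∀ r : ℝ, 0 < r →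
      Λ r = ((k : ℝ) * n - 1) / Real.sinh r ^ 2 - ((k : ℝ) - 1) / Real.cosh r ^ 2)
    (lam2 : ℝ)
    (g₂ g₂' g₂'' : ℝ → ℝ)
    (hg₂d : ∀ r : ℝ, 0 < r → HasDerivAt g₂ (g₂' r) r)
    (hg₂d' : ∀ r : ℝ, 0 < r → HasDerivAt g₂' (g₂'' r) r)
    (hg₂c : ContinuousOn g₂'' (Set.Ioi 0))
    (hg₂ode : ∀ r : ℝ, 0 < r → g₂'' r + H r * g₂' r + (lam2 - Λ r) * g₂ r = 0)
    (hg₂pos : ∀ r ∈ Set.Ioo (0 : ℝ) R, 0 < g₂ r)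
    (hg₂R : g₂ R = 0)
    (hg₂lim : Filter.Tendsto (fun r => g₂ r / r) (nhdsWithin 0 (Set.Ioi 0)) (nhds 1))
    (hg₂'lim : Filter.Tendsto g₂' (nhdsWithin 0 (Set.Ioi 0)) (nhds 1))
    (hubar1 : ∃ v : ℝ → ℝ, ContDiffOn ℝ 1 v (Set.Icc 0 R) ∧
      (∀ r ∈ Set.Ioo (0 : ℝ) R,
        v r = Real.sinh r ^ (((k : ℝ) * n - 1) / 2) * Real.cosh r ^ (((k : ℝ) - 1) / 2) * g₁ r) ∧
      v 0 = 0 ∧ v R = 0)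
    (hubar2 : ∃ v : ℝ → ℝ, ContDiffOn ℝ 1 v (Set.Icc 0 R) ∧
      (∀ r ∈ Set.Ioo (0 : ℝ) R,
        v r = Real.sinh r ^ (((k : ℝ) * n - 1) / 2) * Real.cosh r ^ (((k : ℝ) - 1) / 2) * g₂ r) ∧
      v 0 = 0 ∧ v R = 0) :
    Λ R ≤ lam2 - lam1 := by
  by_contra hcon
  push_neg at hcon
  have hk2 : (2 : ℝ) ≤ (k : ℝ) := by rcases hk with h | h | h <;> norm_num [h]
  have hn2 : (2 : ℝ) ≤ (n : ℝ) := by exact_mod_cast hn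
  set a : ℝ := (k : ℝ) * n - 1 with ha
  set b : ℝ := (k : ℝ) - 1 with hb
  have hapos : 0 < a := by nlinarith
  have hbpos : 0 < b := by nlinarith
  have hab : b ≤ a := by nlinarith
  -- the weight ρ = sinh^a · cosh^b, written via exp/log
  set ρ : ℝ → ℝ := fun r => Real.exp (a * Real.log (Real.sinh r) + b * Real.log (Real.cosh r))
    with hρdef
  have hρpos : ∀ r : ℝ, 0 < ρ r := fun r => Real.exp_pos _
  have hρd : ∀ r : ℝ, 0 < r → HasDerivAt ρ (ρ r * H r) r := by
    intro r hr
    have hs : 0 < Real.sinh r := by simpa using hr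
    have hc : 0 < Real.cosh r := Real.cosh_pos r
    have h1 : HasDerivAt (fun x => Real.log (Real.sinh x)) (Real.cosh r / Real.sinh r) r := by
      simpa using (Real.hasDerivAt_sinh r).log hs.ne'
    have h2 : HasDerivAt (fun x => Real.log (Real.cosh x)) (Real.sinh r / Real.cosh r) r := by
      simpa using (Real.hasDerivAt_cosh r).log hc.ne'
    have := ((h1.const_mul a).add (h2.const_mul b)).exp
    convert this using 1
    · rfl
    rw [hH r hr, Real.tanh_eq_sinh_div_cosh]
    rfl
  -- the Wronskian
  set W : ℝ → ℝ := fun r => g₂' r * g₁ r - g₁' r * g₂ r with hWdef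
  set F : ℝ → ℝ := fun r => ρ r * W r with hFdef
  have hFd : ∀ r : ℝ, 0 < r →
      HasDerivAt F (ρ r * ((lam1 - lam2 + Λ r) * (g₁ r * g₂ r))) r := by
    intro r hr
    have hWd : HasDerivAt W
        (g₂'' r * g₁ r + g₂' r * g₁' r - (g₁'' r * g₂ r + g₁' r * g₂' r)) r :=
      ((hg₂d' r hr).mul (hg₁d r hr)).sub ((hg₁d' r hr).mul (hg₂d r hr))
    have hmul := (hρd r hr).mul hWd
    convert hmul using 1
    · rfl
    · rfl
    · rfl
    have e1 := hg₁ode r hr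
    have e2 := hg₂ode r hr
    simp only [hWdef]
    linear_combination (ρ r * g₂ r) * e1 - (ρ r * g₁ r) * e2
  -- monotonicity of Λ
  have hΛmono : ∀ r ∈ Set.Ioo (0 : ℝ) R, Λ R ≤ Λ r := by
    intro r hr
    rw [hΛ r hr.1, hΛ R hR]
    set s := Real.sinh r with hsdef
    set S := Real.sinh R with hSdef
    have hs : 0 < s := by simpa [hsdef] using hr.1
    have hsS : s ≤ S := by
      simpa [hsdef, hSdef] using (Real.sinh_le_sinh.mpr hr.2.le)
    have hc2 : Real.cosh r ^ 2 = s ^ 2 + 1 := Real.cosh_sq r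
    have hC2 : Real.cosh R ^ 2 = S ^ 2 + 1 := Real.cosh_sq R
    rw [hc2, hC2, ← sub_nonneg]
    have hS : 0 < S := lt_of_lt_of_le hs hsS
    have key : a / s ^ 2 - b / (s ^ 2 + 1) - (a / S ^ 2 - b / (S ^ 2 + 1)) =
        (S ^ 2 - s ^ 2) * (a * ((s ^ 2 + 1) * (S ^ 2 + 1)) - b * (s ^ 2 * S ^ 2)) /
          (s ^ 2 * S ^ 2 * ((s ^ 2 + 1) * (S ^ 2 + 1))) := by
      field_simp
      ring
    rw [key]
    apply div_nonneg
    · have h1 : s ^ 2 ≤ S ^ 2 := by nlinarith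
      have hq : s ^ 2 * S ^ 2 ≤ (s ^ 2 + 1) * (S ^ 2 + 1) := by nlinarith [sq_nonneg s, sq_nonneg S]
      have h2 : b * (s ^ 2 * S ^ 2) ≤ a * ((s ^ 2 + 1) * (S ^ 2 + 1)) :=
        mul_le_mul hab hq (by positivity) (le_of_lt (lt_of_lt_of_le hbpos hab))
      exact mul_nonneg (by linarith) (by linarith)
    · positivity
  -- F is strictly increasing on (0, R]
  have key : ∀ s t : ℝ, 0 < s → s < t → t ≤ R → F s < F t := by
    intro s t hs hst htR
    have hmono : StrictMonoOn F (Set.Icc s t) := by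
      apply strictMonoOn_of_deriv_pos (convex_Icc s t)
      · intro x hx
        exact ((hFd x (lt_of_lt_of_le hs hx.1)).continuousAt).continuousWithinAt
      · intro x hx
        rw [interior_Icc] at hx
        have hx0 : 0 < x := hs.trans hx.1
        have hxR : x < R := lt_of_lt_of_le hx.2 htR
        rw [(hFd x hx0).deriv]
        have h1 := hg₁pos x ⟨hx0, hxR⟩
        have h2 := hg₂pos x ⟨hx0, hxR⟩
        have h3 : 0 < lam1 - lam2 + Λ x := by
          have := hΛmono x ⟨hx0, hxR⟩; linarith
        exact mul_pos (hρpos x) (mul_pos h3 (mul_pos h1 h2))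
    exact hmono ⟨le_refl s, hst.le⟩ ⟨hst.le, le_refl t⟩ hst
  have hFR : F R = 0 := by simp [hFdef, hWdef, hg₁R, hg₂R]
  have hhalf : 0 < R / 2 := by linarith
  have hFhalf : F (R / 2) < 0 := by
    have h := key (R / 2) R hhalf (by linarith) le_rfl
    rw [hFR] at h
    exact h
  -- F tends to 0 at 0⁺
  have hsinh0 : Filter.Tendsto Real.sinh (nhdsWithin 0 (Set.Ioi 0))
      (nhdsWithin 0 (Set.Ioi 0)) := by
    apply tendsto_nhdsWithin_of_tendsto_nhds_of_eventually_within
    · simpa using (Real.continuous_sinh.tendsto 0).mono_left nhdsWithin_le_nhds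
    · filter_upwards [self_mem_nhdsWithin] with r hr
      simpa using (hr : (0 : ℝ) < r)
  have hρ0 : Filter.Tendsto ρ (nhdsWithin 0 (Set.Ioi 0)) (nhds 0) := by
    have hlogs : Filter.Tendsto (fun r => Real.log (Real.sinh r))
        (nhdsWithin 0 (Set.Ioi 0)) Filter.atBot :=
      Real.tendsto_log_nhdsGT_zero.comp hsinh0
    have h1 : Filter.Tendsto (fun r => a * Real.log (Real.sinh r))
        (nhdsWithin 0 (Set.Ioi 0)) Filter.atBot :=
      Filter.tendsto_const_mul_atBot_of_pos hapos |>.mpr hlogs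
    have h2 : Filter.Tendsto (fun r => b * Real.log (Real.cosh r))
        (nhdsWithin 0 (Set.Ioi 0)) (nhds 0) := by
      have hc : ContinuousAt (fun r => b * Real.log (Real.cosh r)) 0 := by
        apply ContinuousAt.mul continuousAt_const
        exact (Real.continuousAt_log (by simp [(Real.cosh_pos _).ne'])).comp
          Real.continuous_cosh.continuousAt
      have := hc.tendsto.mono_left (nhdsWithin_le_nhds (s := Set.Ioi (0:ℝ)))
      simpa using this
    have hsum : Filter.Tendsto
        (fun r => a * Real.log (Real.sinh r) + b * Real.log (Real.cosh r))
        (nhdsWithin 0 (Set.Ioi 0)) Filter.atBot :=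
      Filter.tendsto_atBot_add_right_of_ge' _ 1 h1
        (h2.eventually_le_const (one_pos (α := ℝ)))
    exact Real.tendsto_exp_atBot.comp hsum
  have hg₂0 : Filter.Tendsto g₂ (nhdsWithin 0 (Set.Ioi 0)) (nhds 0) := by
    have hid : Filter.Tendsto (fun r : ℝ => r) (nhdsWithin 0 (Set.Ioi 0)) (nhds 0) :=
      (continuous_id.tendsto 0).mono_left nhdsWithin_le_nhds
    have hprod := hg₂lim.mul hid
    rw [one_mul] at hprod
    apply hprod.congr'
    filter_upwards [self_mem_nhdsWithin] with r hr
    have : r ≠ 0 := ne_of_gt hr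
    field_simp
  have hW0 : Filter.Tendsto W (nhdsWithin 0 (Set.Ioi 0)) (nhds 1) := by
    have := (hg₂'lim.mul hg₁lim).sub (hg₁'lim.mul hg₂0)
    simpa [hWdef] using this
  have hF0 : Filter.Tendsto F (nhdsWithin 0 (Set.Ioi 0)) (nhds 0) := by
    have := hρ0.mul hW0
    simpa [hFdef] using this
  -- contradiction
  have hub : ∀ᶠ s in nhdsWithin 0 (Set.Ioi 0), F s ≤ F (R / 2) := by
    filter_upwards [Ioo_mem_nhdsGT_of_mem ⟨le_refl (0 : ℝ), hhalf⟩] with s hs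
    exact (key s (R / 2) hs.1 hs.2 (by linarith)).le
  have : (0 : ℝ) ≤ F (R / 2) := le_of_tendsto hF0 hub
  linarith
end

section
/- G′(r) ≥ 0 for all r ∈ (0,R): the quotient G = g₂/g₁ of the radial parts of the second and first Dirichlet eigenfunctions of a geodesic ball in 𝕂ℍⁿ is monotone nondecreasing on (0,R). -/
open Real Filter Set

/-- Auxiliary: derivative of the volume density `sinh r ^ m * cosh r ^ j`. -/
lemma aux_density_deriv (m j r : ℝ) (hr : 0 < r) :
    HasDerivAt (fun x : ℝ => Real.sinh x ^ m * Real.cosh x ^ j)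
      ((m * (Real.cosh r / Real.sinh r) + j * (Real.sinh r / Real.cosh r)) *
        (Real.sinh r ^ m * Real.cosh r ^ j)) r := by
  have hs : 0 < Real.sinh r := Real.sinh_pos_iff.mpr hr
  have hc : 0 < Real.cosh r := Real.cosh_pos r
  have d1 : HasDerivAt (fun x : ℝ => Real.sinh x ^ m)
      ((m * Real.sinh r ^ (m - 1)) * Real.cosh r) r :=
    (Real.hasDerivAt_rpow_const (Or.inl hs.ne')).comp r (Real.hasDerivAt_sinh r)
  have d2 : HasDerivAt (fun x : ℝ => Real.cosh x ^ j)
      ((j * Real.cosh r ^ (j - 1)) * Real.sinh r) r :=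
    (Real.hasDerivAt_rpow_const (Or.inl hc.ne')).comp r (Real.hasDerivAt_cosh r)
  have h := d1.mul d2
  refine h.congr_deriv (Eq.symm ?_)
  rw [Real.rpow_sub_one hs.ne', Real.rpow_sub_one hc.ne']
  field_simp

/-- The quotient G = g₂/g₁ of the radial parts of the second and first
Dirichlet eigenfunctions of a geodesic ball in 𝕂ℍⁿ is monotone nondecreasing on
(0,R): G′(r) ≥ 0 for all r ∈ (0,R). -/
theorem stmt_7
    (k n : ℕ) (hk : k = 2 ∨ k = 4 ∨ k = 8) (hn : 2 ≤ n) (hk8 : k = 8 → n = 2)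
    (H : ℝ → ℝ)
    (hH : ∀ r : ℝ, 0 < r →
      H r = ((k : ℝ) * n - 1) * (Real.cosh r / Real.sinh r) + ((k : ℝ) - 1) * Real.tanh r)
    (R lam1 : ℝ) (hR : 0 < R) (hlam1 : 0 < lam1)
    (g₁ g₁' g₁'' : ℝ → ℝ)
    (hg₁d : ∀ r : ℝ, 0 < r → HasDerivAt g₁ (g₁' r) r)
    (hg₁d' : ∀ r : ℝ, 0 < r → HasDerivAt g₁' (g₁'' r) r)
    (hg₁c : ContinuousOn g₁'' (Set.Ioi 0))
    (hg₁ode : ∀ r : ℝ, 0 < r → g₁'' r + H r * g₁' r + lam1 * g₁ r = 0)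
    (hg₁pos : ∀ r ∈ Set.Ioo (0 : ℝ) R, 0 < g₁ r)
    (hg₁R : g₁ R = 0)
    (hg₁lim : Filter.Tendsto g₁ (nhdsWithin 0 (Set.Ioi 0)) (nhds 1))
    (hg₁'lim : Filter.Tendsto g₁' (nhdsWithin 0 (Set.Ioi 0)) (nhds 0))
    (Λ : ℝ → ℝ)
    (hΛ : ∀ r : ℝ, 0 < r →
      Λ r = ((k : ℝ) * n - 1) / Real.sinh r ^ 2 - ((k : ℝ) - 1) / Real.cosh r ^ 2)
    (lam2 : ℝ)
    (g₂ g₂' g₂'' : ℝ → ℝ)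
    (hg₂d : ∀ r : ℝ, 0 < r → HasDerivAt g₂ (g₂' r) r)
    (hg₂d' : ∀ r : ℝ, 0 < r → HasDerivAt g₂' (g₂'' r) r)
    (hg₂c : ContinuousOn g₂'' (Set.Ioi 0))
    (hg₂ode : ∀ r : ℝ, 0 < r → g₂'' r + H r * g₂' r + (lam2 - Λ r) * g₂ r = 0)
    (hg₂pos : ∀ r ∈ Set.Ioo (0 : ℝ) R, 0 < g₂ r)
    (hg₂R : g₂ R = 0)
    (hg₂lim : Filter.Tendsto (fun r => g₂ r / r) (nhdsWithin 0 (Set.Ioi 0)) (nhds 1))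
    (hg₂'lim : Filter.Tendsto g₂' (nhdsWithin 0 (Set.Ioi 0)) (nhds 1))
    (hubar1 : ∃ v : ℝ → ℝ, ContDiffOn ℝ 1 v (Set.Icc 0 R) ∧
      (∀ r ∈ Set.Ioo (0 : ℝ) R,
        v r = Real.sinh r ^ (((k : ℝ) * n - 1) / 2) * Real.cosh r ^ (((k : ℝ) - 1) / 2) * g₁ r) ∧
      v 0 = 0 ∧ v R = 0)
    (hubar2 : ∃ v : ℝ → ℝ, ContDiffOn ℝ 1 v (Set.Icc 0 R) ∧
      (∀ r ∈ Set.Ioo (0 : ℝ) R,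
        v r = Real.sinh r ^ (((k : ℝ) * n - 1) / 2) * Real.cosh r ^ (((k : ℝ) - 1) / 2) * g₂ r) ∧
      v 0 = 0 ∧ v R = 0) :
    ∀ r ∈ Set.Ioo (0 : ℝ) R, 0 ≤ deriv (fun s => g₂ s / g₁ s) r := by
  clear hubar1 hubar2 hk8 hg₁c hg₂c
  -- basic numeric facts
  have hk2 : (2 : ℝ) ≤ (k : ℝ) := by rcases hk with h | h | h <;> subst h <;> norm_num
  have hn2 : (2 : ℝ) ≤ (n : ℝ) := by exact_mod_cast hn
  set m : ℝ := (k : ℝ) * n - 1 with hm_def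
  set j : ℝ := (k : ℝ) - 1 with hj_def
  have hj1 : (1 : ℝ) ≤ j := by rw [hj_def]; linarith
  have hjm : j ≤ m := by rw [hj_def, hm_def]; nlinarith
  have hm1 : (1 : ℝ) ≤ m := by linarith
  set b : ℝ → ℝ := fun r => Real.sinh r ^ m * Real.cosh r ^ j with hb_def
  set P : ℝ → ℝ := fun r => g₁ r * g₂' r - g₂ r * g₁' r with hP_def
  set W : ℝ → ℝ := fun r => b r * P r with hW_def
  have hbpos : ∀ r : ℝ, 0 < r → 0 < b r := fun r hr =>
    mul_pos (Real.rpow_pos_of_pos (Real.sinh_pos_iff.mpr hr) m)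
      (Real.rpow_pos_of_pos (Real.cosh_pos r) j)
  -- derivative of the density
  have hbd : ∀ r : ℝ, 0 < r → HasDerivAt b (H r * b r) r := by
    intro r hr
    have h := aux_density_deriv m j r hr
    have hc : 0 < Real.cosh r := Real.cosh_pos r
    rw [hH r hr, Real.tanh_eq_sinh_div_cosh]
    exact h
  -- derivative of the Wronskian
  have hPd : ∀ r : ℝ, 0 < r →
      HasDerivAt P ((lam1 - lam2 + Λ r) * (g₁ r * g₂ r) - H r * P r) r := by
    intro r hr
    have h := ((hg₁d r hr).mul (hg₂d' r hr)).sub ((hg₂d r hr).mul (hg₁d' r hr))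
    refine h.congr_deriv (Eq.symm ?_)
    have e1 := hg₁ode r hr
    have e2 := hg₂ode r hr
    rw [hP_def]
    linear_combination g₂ r * e1 - g₁ r * e2
  have hWd : ∀ r : ℝ, 0 < r →
      HasDerivAt W ((lam1 - lam2 + Λ r) * (b r * (g₁ r * g₂ r))) r := by
    intro r hr
    have h := (hbd r hr).mul (hPd r hr)
    refine h.congr_deriv (Eq.symm ?_)
    ring
  -- Λ is antitone on (0,∞)
  have hΛanti : ∀ a c : ℝ, 0 < a → a ≤ c → Λ c ≤ Λ a := by
    intro a c ha hac
    have hc : 0 < c := lt_of_lt_of_le ha hac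
    rw [hΛ a ha, hΛ c hc]
    have hsa : 0 < Real.sinh a := Real.sinh_pos_iff.mpr ha
    have hsc : 0 < Real.sinh c := Real.sinh_pos_iff.mpr hc
    have hca : 0 < Real.cosh a := Real.cosh_pos a
    have hcc : 0 < Real.cosh c := Real.cosh_pos c
    have hs : Real.sinh a ≤ Real.sinh c := Real.sinh_le_sinh.mpr hac
    have hqa : Real.cosh a ^ 2 = Real.sinh a ^ 2 + 1 := Real.cosh_sq a
    have hqc : Real.cosh c ^ 2 = Real.sinh c ^ 2 + 1 := Real.cosh_sq c
    set sa := Real.sinh a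
    set sc := Real.sinh c
    have hD : 0 ≤ sc ^ 2 - sa ^ 2 := by nlinarith
    have h1 : m / sa ^ 2 - m / sc ^ 2 = m * ((sc ^ 2 - sa ^ 2) / (sa ^ 2 * sc ^ 2)) := by
      field_simp
    have h2 : j / Real.cosh a ^ 2 - j / Real.cosh c ^ 2
        = j * ((sc ^ 2 - sa ^ 2) / (Real.cosh a ^ 2 * Real.cosh c ^ 2)) := by
      rw [hqa, hqc]; field_simp; ring
    have hden : sa ^ 2 * sc ^ 2 ≤ Real.cosh a ^ 2 * Real.cosh c ^ 2 := by nlinarith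
    have t1 : (sc ^ 2 - sa ^ 2) / (Real.cosh a ^ 2 * Real.cosh c ^ 2)
        ≤ (sc ^ 2 - sa ^ 2) / (sa ^ 2 * sc ^ 2) :=
      div_le_div_of_nonneg_left hD (by positivity) hden
    have t2 : j * ((sc ^ 2 - sa ^ 2) / (Real.cosh a ^ 2 * Real.cosh c ^ 2))
        ≤ m * ((sc ^ 2 - sa ^ 2) / (sa ^ 2 * sc ^ 2)) := by
      calc j * ((sc ^ 2 - sa ^ 2) / (Real.cosh a ^ 2 * Real.cosh c ^ 2))
          ≤ j * ((sc ^ 2 - sa ^ 2) / (sa ^ 2 * sc ^ 2)) := by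
            apply mul_le_mul_of_nonneg_left t1 (by linarith)
        _ ≤ m * ((sc ^ 2 - sa ^ 2) / (sa ^ 2 * sc ^ 2)) := by
            apply mul_le_mul_of_nonneg_right hjm (by positivity)
    linarith
  -- limit of W at 0⁺
  have hb0 : Tendsto b (nhdsWithin 0 (Set.Ioi 0)) (nhds 0) := by
    have hcb : ContinuousAt b 0 := by
      apply ContinuousAt.mul
      · exact (Real.continuousAt_rpow_const _ m (Or.inr (by linarith))).comp
          Real.continuous_sinh.continuousAt
      · exact (Real.continuousAt_rpow_const _ j (Or.inl (Real.cosh_pos 0).ne')).comp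
          Real.continuous_cosh.continuousAt
    have hb0v : b 0 = 0 := by
      simp [hb_def, Real.sinh_zero, Real.zero_rpow (by linarith : m ≠ 0)]
    have h2 : Tendsto b (nhdsWithin 0 (Set.Ioi 0)) (nhds (b 0)) :=
      hcb.tendsto.mono_left nhdsWithin_le_nhds
    rwa [hb0v] at h2
  have hg₂0 : Tendsto g₂ (nhdsWithin 0 (Set.Ioi 0)) (nhds 0) := by
    have h := hg₂lim.mul (tendsto_id.mono_left (nhdsWithin_le_nhds : nhdsWithin (0:ℝ) (Set.Ioi 0) ≤ nhds 0))
    rw [mul_zero] at h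
    refine h.congr' ?_
    filter_upwards [self_mem_nhdsWithin] with r hr
    have : (r : ℝ) ≠ 0 := ne_of_gt hr
    field_simp
    rfl
  have hP0 : Tendsto P (nhdsWithin 0 (Set.Ioi 0)) (nhds 1) := by
    have h := (hg₁lim.mul hg₂'lim).sub (hg₂0.mul hg₁'lim)
    simpa using h
  have hW0 : Tendsto W (nhdsWithin 0 (Set.Ioi 0)) (nhds 0) := by
    have := hb0.mul hP0
    simpa using this
  -- limit of W at R⁻
  have hWR : Tendsto W (nhdsWithin R (Set.Iio R)) (nhds 0) := by
    have hbR : ContinuousAt b R := by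
      apply ContinuousAt.mul
      · exact (Real.continuousAt_rpow_const _ m
          (Or.inl (Real.sinh_pos_iff.mpr hR).ne')).comp Real.continuous_sinh.continuousAt
      · exact (Real.continuousAt_rpow_const _ j (Or.inl (Real.cosh_pos R).ne')).comp
          Real.continuous_cosh.continuousAt
    have hPR : ContinuousAt P R :=
      ((hg₁d R hR).continuousAt.mul (hg₂d' R hR).continuousAt).sub
        ((hg₂d R hR).continuousAt.mul (hg₁d' R hR).continuousAt)
    have hWRv : W R = 0 := by simp [hW_def, hP_def, hg₁R, hg₂R]
    have h2 : Tendsto W (nhdsWithin R (Set.Iio R)) (nhds (W R)) :=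
      (hbR.mul hPR).tendsto.mono_left nhdsWithin_le_nhds
    rwa [hWRv] at h2
  -- main step: W ≥ 0 on (0,R)
  intro r₀ hr₀
  obtain ⟨hr₀0, hr₀R⟩ := hr₀
  have hkey : 0 ≤ W r₀ := by
    rcases le_or_gt 0 (lam1 - lam2 + Λ r₀) with hf | hf
    · -- monotone up to r₀
      have hmono : MonotoneOn W (Set.Ioc 0 r₀) := by
        apply monotoneOn_of_deriv_nonneg (convex_Ioc 0 r₀)
        · intro x hx; exact ((hWd x hx.1).continuousAt).continuousWithinAt
        · rw [interior_Ioc]; intro x hx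
          exact ((hWd x hx.1).differentiableAt).differentiableWithinAt
        · rw [interior_Ioc]; intro x hx
          rw [(hWd x hx.1).deriv]
          have hΛx : Λ r₀ ≤ Λ x := hΛanti x r₀ hx.1 (le_of_lt hx.2)
          have hfx : 0 ≤ lam1 - lam2 + Λ x := by linarith
          have hxR : x < R := lt_trans hx.2 hr₀R
          have := mul_nonneg (le_of_lt (hbpos x hx.1))
            (mul_nonneg (le_of_lt (hg₁pos x ⟨hx.1, hxR⟩)) (le_of_lt (hg₂pos x ⟨hx.1, hxR⟩)))
          exact mul_nonneg hfx this
      have hev : ∀ᶠ s in nhdsWithin (0:ℝ) (Set.Ioi 0), W s ≤ W r₀ := by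
        filter_upwards [Ioo_mem_nhdsGT_of_mem (⟨le_refl 0, hr₀0⟩ : (0:ℝ) ∈ Set.Ico 0 r₀)]
          with s hs
        exact hmono ⟨hs.1, le_of_lt hs.2⟩ ⟨hr₀0, le_refl r₀⟩ (le_of_lt hs.2)
      exact le_of_tendsto hW0 hev
    · -- antitone from r₀ to R
      have hanti : AntitoneOn W (Set.Ico r₀ R) := by
        apply antitoneOn_of_deriv_nonpos (convex_Ico r₀ R)
        · intro x hx
          exact ((hWd x (lt_of_lt_of_le hr₀0 hx.1)).continuousAt).continuousWithinAt
        · rw [interior_Ico]; intro x hx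
          exact ((hWd x (lt_trans hr₀0 hx.1)).differentiableAt).differentiableWithinAt
        · rw [interior_Ico]; intro x hx
          have hx0 : 0 < x := lt_trans hr₀0 hx.1
          rw [(hWd x hx0).deriv]
          have hΛx : Λ x ≤ Λ r₀ := hΛanti r₀ x hr₀0 (le_of_lt hx.1)
          have hfx : lam1 - lam2 + Λ x ≤ 0 := by linarith
          have hpos : 0 ≤ b x * (g₁ x * g₂ x) :=
            mul_nonneg (le_of_lt (hbpos x hx0))
              (mul_nonneg (le_of_lt (hg₁pos x ⟨hx0, hx.2⟩)) (le_of_lt (hg₂pos x ⟨hx0, hx.2⟩)))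
          exact mul_nonpos_of_nonpos_of_nonneg hfx hpos
      have hev : ∀ᶠ s in nhdsWithin R (Set.Iio R), W s ≤ W r₀ := by
        filter_upwards [Ioo_mem_nhdsLT_of_mem (⟨hr₀R, le_refl R⟩ : R ∈ Set.Ioc r₀ R)]
          with s hs
        exact hanti ⟨le_refl r₀, hr₀R⟩ ⟨le_of_lt hs.1, hs.2⟩ (le_of_lt hs.1)
      exact le_of_tendsto hWR hev
  -- conclude
  have hPnn : 0 ≤ P r₀ := by
    have hb := hbpos r₀ hr₀0
    have hkey' : 0 ≤ b r₀ * P r₀ := hkey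
    nlinarith [hkey', hb]
  have hg₁r₀ : g₁ r₀ ≠ 0 := ne_of_gt (hg₁pos r₀ ⟨hr₀0, hr₀R⟩)
  have hder := ((hg₂d r₀ hr₀0).div (hg₁d r₀ hr₀0) hg₁r₀).deriv
  rw [show (fun s => g₂ s / g₁ s) = g₂ / g₁ from rfl, hder]
  apply div_nonneg _ (sq_nonneg _)
  have : P r₀ = g₁ r₀ * g₂' r₀ - g₂ r₀ * g₁' r₀ := rfl
  linarith [hPnn]
end

section
/- For every real r > 0, (4r² − 3)·cosh(r) + 3(1 + 4r²)·cosh(3r) + 2r·sinh(r) − 10r·sinh(3r) > 0. -/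
lemma sinh_lt_mul_cosh (r : ℝ) (hr : 0 < r) : Real.sinh r < r * Real.cosh r := by
  have h : StrictMonoOn (fun x => x * Real.cosh x - Real.sinh x) (Set.Ici 0) := by
    apply strictMonoOn_of_deriv_pos (convex_Ici 0)
    · fun_prop
    · intro x hx
      rw [interior_Ici, Set.mem_Ioi] at hx
      have hd : HasDerivAt (fun x => x * Real.cosh x - Real.sinh x) (x * Real.sinh x) x := by
        have := ((hasDerivAt_id' x).mul (Real.hasDerivAt_cosh x)).sub (Real.hasDerivAt_sinh x)
        exact this.congr_deriv (by ring)
      rw [hd.deriv]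
      exact mul_pos hx (Real.sinh_pos_iff.mpr hx)
  have := h (Set.self_mem_Ici) (Set.mem_Ici.mpr hr.le) hr
  simpa using this

/-- For every real r > 0,
(4r² − 3)·cosh(r) + 3(1 + 4r²)·cosh(3r) + 2r·sinh(r) − 10r·sinh(3r) > 0. -/
theorem stmt_16 (r : ℝ) (hr : 0 < r) :
    0 < (4 * r ^ 2 - 3) * Real.cosh r + 3 * (1 + 4 * r ^ 2) * Real.cosh (3 * r) +
      2 * r * Real.sinh r - 10 * r * Real.sinh (3 * r) := by
  rw [Real.cosh_three_mul, Real.sinh_three_mul]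
  have hs : r < Real.sinh r := Real.self_lt_sinh_iff.mpr hr
  have hc3 : Real.cosh r ^ 3 = Real.cosh r * (Real.sinh r ^ 2 + 1) := by
    have h := Real.cosh_sq r
    calc Real.cosh r ^ 3 = Real.cosh r * Real.cosh r ^ 2 := by ring
    _ = Real.cosh r * (Real.sinh r ^ 2 + 1) := by rw [h]
  have hsc := sinh_lt_mul_cosh r hr
  have hsp : 0 < Real.sinh r := lt_trans hr hs
  have hcp : 0 < Real.cosh r := Real.cosh_pos r
  have A := mul_lt_mul_of_pos_left hsc (by positivity : (0:ℝ) < 40 * (r * Real.sinh r ^ 2))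
  have B := mul_lt_mul_of_pos_left hsc (by positivity : (0:ℝ) < 28 * r)
  have C : 0 < Real.cosh r * ((Real.sinh r - r) * (Real.sinh r + r)) :=
    mul_pos hcp (mul_pos (sub_pos.mpr hs) (by linarith))
  have D : 0 < r ^ 2 * Real.sinh r ^ 2 * Real.cosh r := by positivity
  nlinarith [A, B, C, D]
end
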